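/- arXiv:2408.10875 — 3 statements merged into one kernel-verified Lean document; each statement's English description precedes it below -/
import Mathlib

section
/- Let I be a standard dyadic n-partition of [0,1]. Then the diagram H_I is an n × 2n half grid diagram: each of the 2n columns contains exactly one marking, and each of the n rows contains exactly one X and exactly one O. -/
/-- `IsSD l r` means `[l, r]` is a standard dyadic interval
`[k/2^m, (k+1)/2^m] ⊆ [0,1]` with `m ≥ 0`, `0 ≤ k ≤ 2^m - 1`. -/
def IsSD (l r : ℚ) : Prop :=
  ∃ m k : ℕ, k < 2 ^ m ∧ l = (k : ℚ) / 2 ^ m ∧ r = ((k : ℚ) + 1) / 2 ^ m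

/-- A left standard dyadic interval: `[k/2^m, (k+1)/2^m]` with `m ≥ 1` and `k` even. -/
def IsLeftSD (l r : ℚ) : Prop :=
  ∃ m k : ℕ, 1 ≤ m ∧ k < 2 ^ m ∧ Even k ∧
    l = (k : ℚ) / 2 ^ m ∧ r = ((k : ℚ) + 1) / 2 ^ m

/-- A right standard dyadic interval: `[k/2^m, (k+1)/2^m]` with `m ≥ 1` and `k` odd;
by convention `[0,1]` is also regarded as a right standard dyadic interval. -/
def IsRightSD (l r : ℚ) : Prop :=
  (l = 0 ∧ r = 1) ∨
    ∃ m k : ℕ, 1 ≤ m ∧ k < 2 ^ m ∧ Odd k ∧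
      l = (k : ℚ) / 2 ^ m ∧ r = ((k : ℚ) + 1) / 2 ^ m

/-- The set `S` of all standard dyadic intervals, an interval `[l, r]` being
represented by the pair `(l, r)` of its endpoints. -/
def SDSet : Set (ℚ × ℚ) := {A | IsSD A.1 A.2}

/-- The conjugate `Ā` of a standard dyadic interval `A ≠ [0,1]`:
the adjacent standard dyadic interval of the same length, on the right of `A`
if `A` is left, and on the left of `A` if `A` is right. -/
noncomputable def conjSD (A : ℚ × ℚ) : ℚ × ℚ := by
  classical
  exact if IsLeftSD A.1 A.2 then (A.2, 2 * A.2 - A.1) else (2 * A.1 - A.2, A.1)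

/-- The union of two overlapping or adjacent closed intervals, as an interval:
from the smaller left endpoint to the larger right endpoint.  In particular
`sdJoin A (conjSD A)` represents the interval `A ∪ Ā`. -/
def sdJoin (A B : ℚ × ℚ) : ℚ × ℚ := (min A.1 B.1, max A.2 B.2)

/-- A standard dyadic `n`-partition of `[0,1]`: breakpoints
`0 = a_0 < a_1 < ... < a_n = 1` with every `[a_i, a_{i+1}]` a standard dyadic
interval. -/
structure SDPartition (n : ℕ) where
  pts : Fin (n + 1) → ℚ
  first : pts 0 = 0
  last : pts (Fin.last n) = 1
  mono : StrictMono pts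
  sd : ∀ i : Fin n, IsSD (pts i.castSucc) (pts i.succ)

/-- `S(I)`: the set of intervals `[a_i, a_j]` (`i < j`) with endpoints breakpoints
of `I` that are standard dyadic intervals. -/
def SIn {n : ℕ} (I : SDPartition n) : Set (ℚ × ℚ) :=
  {A | (∃ i j : Fin (n + 1), i < j ∧ A = (I.pts i, I.pts j)) ∧ IsSD A.1 A.2}

/-- The midpoint of an interval. -/
def midQ (A : ℚ × ℚ) : ℚ := (A.1 + A.2) / 2

/-- The length of an interval. -/
def lenQ (A : ℚ × ℚ) : ℚ := A.2 - A.1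

/-- `E`: the set of dyadic rationals strictly between 0 and 1. -/
def Edyadic : Set ℚ := {q | ∃ m k : ℕ, 1 ≤ k ∧ k < 2 ^ m ∧ q = (k : ℚ) / 2 ^ m}

/-- `S_L(I) = S(I) ∩ S_L`. -/
def SLIn {n : ℕ} (I : SDPartition n) : Set (ℚ × ℚ) := {A ∈ SIn I | IsLeftSD A.1 A.2}

/-- `S_R(I) = S(I) ∩ S_R`. -/
def SRIn {n : ℕ} (I : SDPartition n) : Set (ℚ × ℚ) := {A ∈ SIn I | IsRightSD A.1 A.2}

/-- `M(I)`: the set of midpoints of the subintervals of `I`. -/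
def MIn {n : ℕ} (I : SDPartition n) : Set ℚ :=
  {q | ∃ i : Fin n, q = midQ (I.pts i.castSucc, I.pts i.succ)}

/-- `E(I)`: the union of `M(I)` with the breakpoints of `I` other than 0 and 1. -/
def EIn {n : ℕ} (I : SDPartition n) : Set ℚ :=
  MIn I ∪ {q | (∃ i : Fin (n + 1), I.pts i = q) ∧ q ≠ 0 ∧ q ≠ 1}

/-- `SignSpec s` says that `s` takes values in `{+1, -1}` on standard dyadic
intervals, `s([0,1]) = +1`, and for `A ≠ [0,1]`, `s A = s (A ∪ Ā)` if `A` is a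
left interval while `s A = - s (A ∪ Ā)` if `A` is a right interval. -/
def SignSpec (s : ℚ × ℚ → ℤ) : Prop :=
  (∀ A ∈ SDSet, s A = 1 ∨ s A = -1) ∧
  s ((0 : ℚ), (1 : ℚ)) = 1 ∧
  ∀ A ∈ SDSet, A ≠ ((0 : ℚ), (1 : ℚ)) →
    (IsLeftSD A.1 A.2 → s A = s (sdJoin A (conjSD A))) ∧
    (IsRightSD A.1 A.2 → s A = - s (sdJoin A (conjSD A)))

/-- Strict version of the length order `<_len`. -/
def lenLT (A B : ℚ × ℚ) : Prop :=
  lenQ A < lenQ B ∨ (lenQ A = lenQ B ∧ midQ A < midQ B)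

/-- `p_x(A)`: one plus the (1-based) rank of `A ∈ S(I)` in the midpoint order. -/
noncomputable def px {n : ℕ} (I : SDPartition n) (A : ℚ × ℚ) : ℕ :=
  ({B ∈ SIn I | midQ B < midQ A}).ncard + 2

/-- the (1-based) rank of a positive interval `A ∈ S_+(I)` in the length order. -/
noncomputable def pyPos {n : ℕ} (I : SDPartition n) (s : ℚ × ℚ → ℤ) (A : ℚ × ℚ) : ℕ :=
  ({B ∈ SIn I | s B = 1 ∧ lenLT B A}).ncard + 1

/-- `p_y(A)`: the length-order rank of `A` if `s A = +1`, and of its conjugate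
otherwise. -/
noncomputable def py {n : ℕ} (I : SDPartition n) (s : ℚ × ℚ → ℤ) (A : ℚ × ℚ) : ℕ :=
  if s A = 1 then pyPos I s A else pyPos I s (conjSD A)

/-- The cells `(column, row)` of the diagram `H_I` carrying an `X`:
one for each `A ∈ S(I)` with `s A = +1`, at position `(p_x A, p_y A)`. -/
def Xcells {n : ℕ} (I : SDPartition n) (s : ℚ × ℚ → ℤ) : Set (ℕ × ℕ) :=
  {c | ∃ A ∈ SIn I, s A = 1 ∧ c = (px I A, py I s A)}

/-- The cells `(column, row)` of the diagram `H_I` carrying an `O`: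
the default `O` in cell `(1, n)`, and one for each `A ∈ S(I)` with `s A = -1`,
at position `(p_x A, p_y A)`. -/
def Ocells {n : ℕ} (I : SDPartition n) (s : ℚ × ℚ → ℤ) : Set (ℕ × ℕ) :=
  insert ((1 : ℕ), n) {c | ∃ A ∈ SIn I, s A = -1 ∧ c = (px I A, py I s A)}

namespace SD12

lemma qpow_pos (m : ℕ) : (0:ℚ) < 2 ^ m := by positivity

lemma pow_inj {m m' : ℕ} (h : (2:ℚ)^m = 2^m') : m = m' := by
  by_contra hne
  rcases Nat.lt_or_ge m m' with hlt | hge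
  · have := pow_lt_pow_right₀ (by norm_num : (1:ℚ) < 2) hlt
    rw [h] at this; exact lt_irrefl _ this
  · have hlt : m' < m := lt_of_le_of_ne hge (fun e => hne e.symm)
    have := pow_lt_pow_right₀ (by norm_num : (1:ℚ) < 2) hlt
    rw [h] at this; exact lt_irrefl _ this

lemma sd_params_unique {m m' k k' : ℕ}
    (h1 : (k:ℚ)/2^m = (k':ℚ)/2^m') (h2 : ((k:ℚ)+1)/2^m = ((k':ℚ)+1)/2^m') :
    m = m' ∧ k = k' := by
  have e1 : (k:ℚ) * 2^m' = k' * 2^m :=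
    (div_eq_div_iff (qpow_pos m).ne' (qpow_pos m').ne').mp h1
  have e2 : ((k:ℚ)+1) * 2^m' = ((k':ℚ)+1) * 2^m :=
    (div_eq_div_iff (qpow_pos m).ne' (qpow_pos m').ne').mp h2
  have hm : (2:ℚ)^m = 2^m' := by linarith
  have hmm : m = m' := pow_inj hm
  subst hmm
  refine ⟨rfl, ?_⟩
  have : (k:ℚ) = k' := by
    have h2m := qpow_pos m
    nlinarith [e1]
  exact_mod_cast this

lemma sd_lt {l r : ℚ} (h : IsSD l r) : l < r := by
  obtain ⟨m, k, hk, hl, hr⟩ := h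
  rw [hl, hr]
  exact div_lt_div_of_pos_right (by linarith) (qpow_pos m)

lemma sd_nonneg {l r : ℚ} (h : IsSD l r) : 0 ≤ l := by
  obtain ⟨m, k, hk, hl, hr⟩ := h
  rw [hl]; positivity

lemma sd_le_one {l r : ℚ} (h : IsSD l r) : r ≤ 1 := by
  obtain ⟨m, k, hk, hl, hr⟩ := h
  rw [hr, div_le_one (qpow_pos m)]
  have : (k:ℚ) + 1 ≤ (2:ℚ)^m := by
    have : ((k+1 : ℕ):ℚ) ≤ ((2^m : ℕ):ℚ) := by exact_mod_cast Nat.cast_le.mpr hk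
    push_cast at this; linarith
  linarith [this]

/-- dichotomy helper with ordered levels -/
lemma sd_dich_le {m p k l : ℕ} (hmp : m ≤ p) :
    ((l:ℚ)+1)/2^p ≤ (k:ℚ)/2^m ∨ ((k:ℚ)+1)/2^m ≤ (l:ℚ)/2^p ∨
    ((k:ℚ)/2^m ≤ (l:ℚ)/2^p ∧ ((l:ℚ)+1)/2^p ≤ ((k:ℚ)+1)/2^m) := by
  set d := p - m with hd
  have hpd : p = m + d := by omega
  have h2 : (2:ℚ)^p = 2^m * 2^d := by rw [hpd, pow_add]
  have key : ∀ a b : ℕ, ((a:ℚ)/2^m ≤ (b:ℚ)/2^p ↔ a * 2^d ≤ b) := by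
    intro a b
    rw [div_le_div_iff₀ (qpow_pos m) (qpow_pos p), h2]
    constructor
    · intro h
      have : (a:ℚ) * 2^d ≤ b := by
        have h2m := qpow_pos m
        nlinarith [qpow_pos d]
      exact_mod_cast this
    · intro h
      have : (a:ℚ) * 2^d ≤ b := by exact_mod_cast h
      nlinarith [qpow_pos m, qpow_pos d]
  have key2 : ∀ a b : ℕ, ((b:ℚ)/2^p ≤ (a:ℚ)/2^m ↔ b ≤ a * 2^d) := by
    intro a b
    rw [div_le_div_iff₀ (qpow_pos p) (qpow_pos m), h2]
    constructor
    · intro h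
      have : (b:ℚ) ≤ a * 2^d := by nlinarith [qpow_pos m, qpow_pos d]
      exact_mod_cast this
    · intro h
      have : (b:ℚ) ≤ a * 2^d := by exact_mod_cast h
      nlinarith [qpow_pos m, qpow_pos d]
  rcases Nat.lt_or_ge l (k * 2^d) with h1 | h1
  · left
    have : l + 1 ≤ k * 2^d := h1
    have := (key2 k (l+1)).mpr this
    push_cast at this ⊢; convert this using 2 <;> push_cast <;> ring
  · rcases Nat.lt_or_ge l ((k+1) * 2^d) with h2' | h2'
    · right; right
      constructor
      · have := (key k l).mpr h1
        exact this
      · have : l + 1 ≤ (k+1) * 2^d := h2'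
        have := (key2 (k+1) (l+1)).mpr this
        push_cast at this ⊢; convert this using 2 <;> push_cast <;> ring
    · right; left
      have := (key (k+1) l).mpr h2'
      push_cast at this ⊢; convert this using 2 <;> push_cast <;> ring

/-- Dichotomy: two standard dyadic intervals are nested or have disjoint interiors. -/
lemma sd_dich {A B : ℚ × ℚ} (hA : IsSD A.1 A.2) (hB : IsSD B.1 B.2) :
    A.2 ≤ B.1 ∨ B.2 ≤ A.1 ∨ (A.1 ≤ B.1 ∧ B.2 ≤ A.2) ∨ (B.1 ≤ A.1 ∧ A.2 ≤ B.2) := by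
  obtain ⟨m, k, hk, hAl, hAr⟩ := hA
  obtain ⟨p, l, hl, hBl, hBr⟩ := hB
  rcases Nat.le_total m p with hmp | hpm
  · rcases sd_dich_le (k := k) (l := l) hmp with h | h | ⟨h1, h2⟩
    · right; left; rw [hBr, hAl]; exact h
    · left; rw [hAr, hBl]; exact h
    · right; right; left
      rw [hAl, hBl, hAr, hBr]; exact ⟨h1, h2⟩
  · rcases sd_dich_le (k := l) (l := k) hpm with h | h | ⟨h1, h2⟩
    · left; rw [hAr, hBl]; exact h
    · right; left; rw [hBr, hAl]; exact h
    · right; right; right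
      rw [hAl, hBl, hAr, hBr]; exact ⟨h1, h2⟩

end SD12
namespace SD12

lemma conj_eq_left {l r : ℚ} (h : IsLeftSD l r) : conjSD (l, r) = (r, 2*r - l) := by
  simp only [conjSD]; rw [if_pos h]

lemma conj_eq_right {l r : ℚ} (h : ¬ IsLeftSD l r) : conjSD (l, r) = (2*l - r, l) := by
  simp only [conjSD]; rw [if_neg h]

lemma sd_cases {l r : ℚ} (h : IsSD l r) :
    (l = 0 ∧ r = 1) ∨ ∃ m k : ℕ, 1 ≤ m ∧ k < 2^m ∧ l = (k:ℚ)/2^m ∧ r = ((k:ℚ)+1)/2^m := by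
  obtain ⟨m, k, hk, hl, hr⟩ := h
  rcases Nat.eq_zero_or_pos m with hm | hm
  · subst hm
    left
    have hk0 : k = 0 := by omega
    subst hk0
    norm_num at hl hr
    exact ⟨hl, hr⟩
  · right; exact ⟨m, k, hm, hk, hl, hr⟩

lemma not_left_top : ¬ IsLeftSD 0 1 := by
  rintro ⟨m, k, hm, hk, hke, hl, hr⟩
  have hk0 : (k:ℚ) = 0 := by
    have := qpow_pos m
    field_simp at hl
    simpa using hl.symm
  rw [hk0] at hr
  norm_num at hr
  have : (2:ℚ)^m = 2^0 := by rw [hr]; norm_num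
  have := pow_inj this
  omega

lemma left_not_top {l r : ℚ} (h : IsLeftSD l r) : (l, r) ≠ ((0:ℚ), (1:ℚ)) := by
  intro he
  have h1 : l = 0 := congrArg Prod.fst he
  have h2 : r = 1 := congrArg Prod.snd he
  rw [h1, h2] at h
  exact not_left_top h

lemma left_sd {l r : ℚ} (h : IsLeftSD l r) : IsSD l r := by
  obtain ⟨m, k, _, hk, _, hl, hr⟩ := h
  exact ⟨m, k, hk, hl, hr⟩

lemma not_left_and_right {l r : ℚ} (hL : IsLeftSD l r) (hR : IsRightSD l r) : False := by
  rcases hR with ⟨h0, h1⟩ | ⟨m', k', hm', hk', hodd, hl', hr'⟩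
  · subst h0; subst h1; exact not_left_top hL
  · obtain ⟨m, k, hm, hk, heven, hl, hr⟩ := hL
    obtain ⟨hmm, hkk⟩ := sd_params_unique (hl ▸ hl') (hr ▸ hr')
    subst hmm; subst hkk
    exact (Nat.not_odd_iff_even.mpr heven) hodd

/-- For a non-top standard dyadic interval, left or right (explicit form). -/
lemma sd_left_or_right {l r : ℚ} (h : IsSD l r) (hne : (l, r) ≠ ((0:ℚ), (1:ℚ))) :
    IsLeftSD l r ∨
      (¬ IsLeftSD l r ∧ ∃ m k : ℕ, 1 ≤ m ∧ k < 2^m ∧ Odd k ∧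
        l = (k:ℚ)/2^m ∧ r = ((k:ℚ)+1)/2^m) := by
  rcases sd_cases h with ⟨h0, h1⟩ | ⟨m, k, hm, hk, hl, hr⟩
  · exact absurd (by rw [h0, h1]) hne
  · rcases Nat.even_or_odd k with he | ho
    · left; exact ⟨m, k, hm, hk, he, hl, hr⟩
    · right
      refine ⟨?_, m, k, hm, hk, ho, hl, hr⟩
      intro hL
      exact not_left_and_right hL (Or.inr ⟨m, k, hm, hk, ho, hl, hr⟩)

lemma lenQ_sd {m k : ℕ} : lenQ ((k:ℚ)/2^m, ((k:ℚ)+1)/2^m) = 1/2^m := by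
  simp only [lenQ]
  field_simp
  ring

lemma lenQ_eq_level {l r : ℚ} {m m' k k' : ℕ}
    (h : ((k:ℚ)/2^m, ((k:ℚ)+1)/2^m) = ((k':ℚ)/2^m', ((k':ℚ)+1)/2^m')) : m = m' ∧ k = k' := by
  have h1 : (k:ℚ)/2^m = (k':ℚ)/2^m' := congrArg Prod.fst h
  have h2 : ((k:ℚ)+1)/2^m = ((k':ℚ)+1)/2^m' := congrArg Prod.snd h
  exact sd_params_unique h1 h2

/-- Everything about the conjugate of a left interval. -/
lemma left_conj_facts {m k : ℕ} (hm : 1 ≤ m) (hk : k < 2^m) (hke : Even k) :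
    ∀ l r : ℚ, l = (k:ℚ)/2^m → r = ((k:ℚ)+1)/2^m →
    conjSD (l, r) = (r, 2*r - l) ∧
    r = ((k+1 : ℕ):ℚ)/2^m ∧ 2*r - l = (((k+1 : ℕ):ℚ)+1)/2^m ∧
    k + 1 < 2^m ∧ Odd (k+1) := by
  intro l r hl hr
  have hL : IsLeftSD l r := ⟨m, k, hm, hk, hke, hl, hr⟩
  have hk1 : k + 1 < 2^m := by
    rcases Nat.lt_or_ge (k+1) (2^m) with h | h
    · exact h
    · have : k + 1 = 2^m := by omega
      have h2 : Even (2^m) := Nat.even_pow.mpr ⟨even_two, by omega⟩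
      rw [← this] at h2
      rcases hke with ⟨a, ha⟩
      rcases h2 with ⟨b, hb⟩
      omega
  refine ⟨conj_eq_left hL, ?_, ?_, hk1, by rcases hke with ⟨a,ha⟩; exact ⟨a, by omega⟩⟩
  · rw [hr]; push_cast; ring_nf
  · rw [hr, hl]; push_cast; field_simp; ring

end SD12
namespace SD12

lemma sdJoin_comm (A B : ℚ × ℚ) : sdJoin A B = sdJoin B A := by
  simp [sdJoin, min_comm, max_comm]

lemma pow_split {m : ℕ} (hm : 1 ≤ m) : (2:ℚ)^m = 2 * 2^(m-1) := by
  rcases Nat.exists_eq_add_of_le hm with ⟨j, hj⟩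
  subst hj
  rw [pow_add, pow_one]
  simp [Nat.add_sub_cancel]

/-- Everything about the conjugate of a right (non-top) interval. -/
lemma right_conj_facts {m k : ℕ} (hm : 1 ≤ m) (hk : k < 2^m) (hko : Odd k) :
    ∀ l r : ℚ, l = (k:ℚ)/2^m → r = ((k:ℚ)+1)/2^m →
    conjSD (l, r) = (2*l - r, l) ∧
    2*l - r = ((k-1 : ℕ):ℚ)/2^m ∧ l = (((k-1 : ℕ):ℚ)+1)/2^m ∧
    k - 1 < 2^m ∧ Even (k-1) := by
  intro l r hl hr
  have hk1 : 1 ≤ k := hko.pos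
  have hR : IsRightSD l r := Or.inr ⟨m, k, hm, hk, hko, hl, hr⟩
  have hnotL : ¬ IsLeftSD l r := fun h => not_left_and_right h hR
  have hcast : ((k - 1 : ℕ):ℚ) = (k:ℚ) - 1 := by
    push_cast [hk1]; ring
  refine ⟨conj_eq_right hnotL, ?_, ?_, by omega, ?_⟩
  · rw [hl, hr, hcast]; field_simp; ring
  · rw [hl, hcast]; ring_nf
  · rcases hko with ⟨a, ha⟩; exact ⟨a, by omega⟩

lemma conj_sd_package {A : ℚ × ℚ} (h : IsSD A.1 A.2) (hne : A ≠ ((0:ℚ),(1:ℚ))) :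
    IsSD (conjSD A).1 (conjSD A).2 ∧
    conjSD (conjSD A) = A ∧
    lenQ (conjSD A) = lenQ A ∧
    conjSD A ≠ A ∧
    conjSD A ≠ ((0:ℚ),(1:ℚ)) ∧
    IsSD (sdJoin A (conjSD A)).1 (sdJoin A (conjSD A)).2 ∧
    (IsLeftSD A.1 A.2 → IsRightSD (conjSD A).1 (conjSD A).2) ∧
    (¬ IsLeftSD A.1 A.2 → IsRightSD A.1 A.2 ∧ IsLeftSD (conjSD A).1 (conjSD A).2) := by
  obtain ⟨l, r⟩ := A
  simp only at h hne ⊢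
  have hlr : l < r := sd_lt h
  have hl0 : 0 ≤ l := sd_nonneg h
  have hr1 : r ≤ 1 := sd_le_one h
  rcases sd_left_or_right h hne with hL | ⟨hnotL, m, k, hm, hk, hko, hl, hr⟩
  · -- A left
    obtain ⟨m, k, hm, hk, hke, hl, hr⟩ := hL
    have hL : IsLeftSD l r := ⟨m, k, hm, hk, hke, hl, hr⟩
    obtain ⟨hconj, hr1', h2rl, hk1, hodd⟩ := left_conj_facts hm hk hke l r hl hr
    have hAbar_sd : IsSD r (2*r - l) := ⟨m, k+1, hk1, by push_cast at hr1' ⊢; exact hr1', by push_cast at h2rl ⊢; exact h2rl⟩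
    have hAbar_R : IsRightSD r (2*r - l) := Or.inr ⟨m, k+1, hm, hk1, hodd, by push_cast at hr1' ⊢; exact hr1', by push_cast at h2rl ⊢; exact h2rl⟩
    have hAbar_nL : ¬ IsLeftSD r (2*r - l) := fun hh => not_left_and_right hh hAbar_R
    have hjoin : sdJoin (l, r) (conjSD (l, r)) = (l, 2*r - l) := by
      rw [hconj]
      simp only [sdJoin]
      rw [min_eq_left (le_of_lt hlr), max_eq_right (by linarith)]
    rw [hconj]
    refine ⟨hAbar_sd, ?_, ?_, ?_, ?_, ?_, fun _ => hAbar_R, fun hn => absurd hL hn⟩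
    · rw [conj_eq_right hAbar_nL]
      have e : 2*r - (2*r - l) = l := by ring
      rw [e]
    · simp only [lenQ]; ring
    · intro he
      have := congrArg Prod.fst he
      simp only at this
      linarith
    · intro he
      have h1 := congrArg Prod.fst he
      simp only at h1
      linarith
    · have hjoin2 : sdJoin (l, r) (r, 2*r - l) = (l, 2*r - l) := by
        simp only [sdJoin]
        rw [min_eq_left (le_of_lt hlr), max_eq_right (by linarith)]
      rw [hjoin2]
      rcases hke with ⟨a, ha⟩
      have hp : 2^(m-1)*2 = 2^m := by rw [← pow_succ]; congr 1; omega
      refine ⟨m - 1, a, by omega, ?_, ?_⟩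
      · simp only
        rw [hl, pow_split hm]
        have : (k:ℚ) = 2 * a := by rw [ha]; push_cast; ring
        rw [this]
        field_simp
      · simp only
        rw [hr, hl, pow_split hm]
        have : (k:ℚ) = 2 * a := by rw [ha]; push_cast; ring
        rw [this]
        field_simp
        ring
  · -- A right
    have hR : IsRightSD l r := Or.inr ⟨m, k, hm, hk, hko, hl, hr⟩
    obtain ⟨hconj, h2lr, hl', hk1, heven⟩ := right_conj_facts hm hk hko l r hl hr
    have hknat : 1 ≤ k := hko.pos
    have hAbar_sd : IsSD (2*l - r) l := ⟨m, k-1, hk1, h2lr, hl'⟩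
    have hAbar_L : IsLeftSD (2*l - r) l := ⟨m, k-1, hm, hk1, heven, h2lr, hl'⟩
    have hjoin : sdJoin (l, r) (conjSD (l, r)) = (2*l - r, r) := by
      rw [hconj]
      simp only [sdJoin]
      rw [min_eq_right (by linarith), max_eq_left (by linarith)]
    rw [hconj]
    refine ⟨hAbar_sd, ?_, ?_, ?_, ?_, ?_, fun hL => absurd hL hnotL, fun _ => ⟨hR, hAbar_L⟩⟩
    · rw [conj_eq_left hAbar_L]
      have e : 2*l - (2*l - r) = r := by ring
      rw [e]
    · simp only [lenQ]; ring
    · intro he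
      have := congrArg Prod.snd he
      simp only at this
      linarith
    · intro he
      have h2 := congrArg Prod.snd he
      simp only at h2
      have h1 := congrArg Prod.fst he
      simp only at h1
      linarith
    · have hjoin2 : sdJoin (l, r) (2*l - r, l) = (2*l - r, r) := by
        simp only [sdJoin]
        rw [min_eq_right (by linarith), max_eq_left (by linarith)]
      rw [hjoin2]
      rcases heven with ⟨a, ha⟩
      have hp : 2^(m-1)*2 = 2^m := by rw [← pow_succ]; congr 1; omega
      refine ⟨m - 1, a, by omega, ?_, ?_⟩
      · simp only
        rw [h2lr, pow_split hm]
        have : ((k-1:ℕ):ℚ) = 2 * a := by rw [ha]; push_cast; ring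
        rw [this]
        field_simp
      · simp only
        rw [hr, pow_split hm]
        have : (k:ℚ) = 2 * a + 1 := by
          have : k = 2*a + 1 := by omega
          rw [this]; push_cast; ring
        rw [this]
        field_simp
        ring

end SD12
namespace SD12

lemma sign_flip {s : ℚ × ℚ → ℤ} (hs : SignSpec s) {A : ℚ × ℚ}
    (h : IsSD A.1 A.2) (hne : A ≠ ((0:ℚ),(1:ℚ))) : s (conjSD A) = - s A := by
  obtain ⟨hCsd, hcc, hlen, hCne, hCnetop, hjsd, hLR, hRL⟩ := conj_sd_package h hne
  by_cases hL : IsLeftSD A.1 A.2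
  · have h1 : s A = s (sdJoin A (conjSD A)) := (hs.2.2 A h hne).1 hL
    have h2 : s (conjSD A) = - s (sdJoin (conjSD A) (conjSD (conjSD A))) :=
      (hs.2.2 (conjSD A) hCsd hCnetop).2 (hLR hL)
    rw [hcc, sdJoin_comm] at h2
    rw [h2, ← h1]
  · obtain ⟨hAR, hCL⟩ := hRL hL
    have h1 : s A = - s (sdJoin A (conjSD A)) := (hs.2.2 A h hne).2 hAR
    have h2 : s (conjSD A) = s (sdJoin (conjSD A) (conjSD (conjSD A))) :=
      (hs.2.2 (conjSD A) hCsd hCnetop).1 hCL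
    rw [hcc, sdJoin_comm] at h2
    rw [h2]
    omega

lemma odd_pow_eq (a b : ℕ) (ha : Odd a) (hb : Odd b) :
    ∀ p q : ℕ, a * 2^p = b * 2^q → p = q ∧ a = b := by
  intro p
  induction p with
  | zero =>
    intro q h
    simp at h
    rcases Nat.eq_zero_or_pos q with h0 | h0
    · subst h0; simp at h; exact ⟨rfl, h⟩
    · exfalso
      have hd : 2 ∣ b * 2^q := Dvd.dvd.mul_left (dvd_pow_self 2 (by omega)) b
      rw [← h] at hd
      rcases ha with ⟨c, hc⟩
      omega
  | succ p ih =>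
    intro q h
    rcases Nat.eq_zero_or_pos q with h0 | h0
    · subst h0
      simp at h
      exfalso
      have hd : 2 ∣ a * 2^(p+1) := Dvd.dvd.mul_left (dvd_pow_self 2 (by omega)) a
      rw [h] at hd
      rcases hb with ⟨c, hc⟩
      omega
    · obtain ⟨q', rfl⟩ : ∃ q', q = q' + 1 := ⟨q-1, by omega⟩
      rw [pow_succ, pow_succ, ← mul_assoc, ← mul_assoc] at h
      have h' : a * 2^p = b * 2^q' := Nat.eq_of_mul_eq_mul_right (by norm_num) h
      obtain ⟨h1, h2⟩ := ih q' h'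
      exact ⟨by omega, h2⟩

lemma midQ_formula {m k : ℕ} {l r : ℚ} (hl : l = (k:ℚ)/2^m) (hr : r = ((k:ℚ)+1)/2^m) :
    midQ (l, r) = ((2*k+1 : ℕ):ℚ)/2^(m+1) := by
  simp only [midQ]
  rw [hl, hr, pow_succ]
  push_cast
  field_simp
  ring

lemma midQ_inj {A B : ℚ × ℚ} (hA : IsSD A.1 A.2) (hB : IsSD B.1 B.2)
    (h : midQ A = midQ B) : A = B := by
  obtain ⟨m, k, hk, hAl, hAr⟩ := hA
  obtain ⟨p, j, hj, hBl, hBr⟩ := hB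
  have hA' : A = ((k:ℚ)/2^m, ((k:ℚ)+1)/2^m) := Prod.ext hAl hAr
  have hB' : B = ((j:ℚ)/2^p, ((j:ℚ)+1)/2^p) := Prod.ext hBl hBr
  rw [hA', hB'] at h ⊢
  rw [midQ_formula rfl rfl, midQ_formula rfl rfl] at h
  have hcross : ((2*k+1 : ℕ):ℚ) * 2^(p+1) = ((2*j+1 : ℕ):ℚ) * 2^(m+1) :=
    (div_eq_div_iff (qpow_pos (m+1)).ne' (qpow_pos (p+1)).ne').mp h
  have hnat : (2*k+1) * 2^(p+1) = (2*j+1) * 2^(m+1) := by exact_mod_cast hcross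
  obtain ⟨h1, h2⟩ := odd_pow_eq _ _ ⟨k, by omega⟩ ⟨j, by omega⟩ _ _ hnat
  have hm : m = p := by omega
  have hkj : k = j := by omega
  subst hm; subst hkj
  rfl

lemma lenQ_pos {A : ℚ × ℚ} (h : IsSD A.1 A.2) : 0 < lenQ A := by
  have := sd_lt h
  simp only [lenQ]
  linarith

lemma lenQ_eq {m k : ℕ} {l r : ℚ} (hl : l = (k:ℚ)/2^m) (hr : r = ((k:ℚ)+1)/2^m) :
    lenQ (l, r) = 1/2^m := by
  simp only [lenQ]
  rw [hl, hr]
  field_simp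
  ring

lemma lenQ_lt_one {A : ℚ × ℚ} (h : IsSD A.1 A.2) (hne : A ≠ ((0:ℚ),(1:ℚ))) :
    lenQ A < 1 := by
  rcases sd_cases h with ⟨h0, h1⟩ | ⟨m, k, hm, hk, hl, hr⟩
  · exact absurd (Prod.ext h0 h1) hne
  · have : lenQ A = 1/2^m := by
      have : A = ((k:ℚ)/2^m, ((k:ℚ)+1)/2^m) := Prod.ext hl hr
      rw [this]; exact lenQ_eq rfl rfl
    rw [this]
    rw [div_lt_one (qpow_pos m)]
    have : (2:ℚ)^0 < 2^m := pow_lt_pow_right₀ (by norm_num) (by omega)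
    simpa using this

lemma lenQ_top : lenQ ((0:ℚ), (1:ℚ)) = 1 := by simp [lenQ]

end SD12
namespace SD12

variable {n : ℕ} {I : SDPartition n}

lemma pts_nonneg (I : SDPartition n) (i : Fin (n+1)) : 0 ≤ I.pts i := by
  have := I.mono.monotone (Fin.zero_le i)
  rw [I.first] at this
  exact this

lemma pts_le_one (I : SDPartition n) (i : Fin (n+1)) : I.pts i ≤ 1 := by
  have := I.mono.monotone (Fin.le_last i)
  rw [I.last] at this
  exact this

lemma mem_SIn_iff {A : ℚ × ℚ} :
    A ∈ SIn I ↔ IsSD A.1 A.2 ∧ (∃ i, I.pts i = A.1) ∧ (∃ j, I.pts j = A.2) := by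
  constructor
  · rintro ⟨⟨i, j, hij, rfl⟩, hsd⟩
    exact ⟨hsd, ⟨i, rfl⟩, ⟨j, rfl⟩⟩
  · rintro ⟨hsd, ⟨i, hi⟩, ⟨j, hj⟩⟩
    have hlt : I.pts i < I.pts j := by rw [hi, hj]; exact sd_lt hsd
    refine ⟨⟨i, j, I.mono.lt_iff_lt.mp hlt, ?_⟩, hsd⟩
    rw [hi, hj]

lemma top_mem (I : SDPartition n) : ((0:ℚ), (1:ℚ)) ∈ SIn I := by
  rw [mem_SIn_iff]
  refine ⟨⟨0, 0, by norm_num, by norm_num⟩, ⟨0, I.first⟩, ⟨Fin.last n, I.last⟩⟩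

/-- If an s.d. interval has a breakpoint as left endpoint, contains a second
breakpoint strictly, then its right endpoint is a breakpoint. -/
lemma right_end_breakpoint {i j : Fin (n+1)} (hij : i < j) {p : ℚ}
    (hp : p ≤ 1) (hjp : I.pts j < p) (hsd : IsSD (I.pts i) p) :
    ∃ t, I.pts t = p := by
  classical
  set T : Finset (Fin (n+1)) := Finset.univ.filter (fun t => p ≤ I.pts t) with hT
  have hTne : T.Nonempty := ⟨Fin.last n, by simp [hT, I.last, hp]⟩
  obtain ⟨t, htT, htmin⟩ := T.exists_min_image id hTne
  have htp : p ≤ I.pts t := by simpa [hT] using htT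
  have hjt : j < t := by
    by_contra hle
    push_neg at hle
    have := I.mono.monotone hle
    linarith
  have htv1 : 1 ≤ t.val := by
    have : (0:ℕ) ≤ j.val := Nat.zero_le _
    have := hjt
    rw [Fin.lt_def] at this
    omega
  have htvn : t.val - 1 < n := by
    have := t.isLt
    omega
  set u : Fin n := ⟨t.val - 1, htvn⟩ with hu
  have hucast : (u.castSucc : Fin (n+1)).val = t.val - 1 := rfl
  have husucc : u.succ = t := by
    apply Fin.ext
    simp [Fin.val_succ, hu]
    omega
  have hcast_lt : u.castSucc < t := by
    rw [Fin.lt_def, hucast]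
    omega
  have hcast_not : ¬ p ≤ I.pts u.castSucc := by
    intro hle
    have : t ≤ u.castSucc := htmin u.castSucc (by simp [hT, hle])
    exact absurd this (not_le.mpr hcast_lt)
  push_neg at hcast_not
  have hjle : j ≤ u.castSucc := by
    rw [Fin.le_def, hucast]
    have := hjt
    rw [Fin.lt_def] at this
    omega
  have hjcast : I.pts j ≤ I.pts u.castSucc := I.mono.monotone hjle
  have hleaf := I.sd u
  rw [husucc] at hleaf
  have hij' : I.pts i < I.pts j := I.mono hij
  rcases sd_dich (A := (I.pts i, p)) (B := (I.pts u.castSucc, I.pts t)) hsd hleaf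
    with h1 | h2 | ⟨h3a, h3b⟩ | ⟨h4a, h4b⟩
  · simp only at h1; linarith
  · simp only at h2; linarith
  · exact ⟨t, le_antisymm h3b htp⟩
  · simp only at h4a h4b
    have : I.pts i < I.pts u.castSucc := lt_of_lt_of_le hij' hjcast
    linarith

/-- Mirror image of `right_end_breakpoint`. -/
lemma left_end_breakpoint {i j : Fin (n+1)} (hij : i < j) {p : ℚ}
    (hp : 0 ≤ p) (hpi : p < I.pts i) (hsd : IsSD p (I.pts j)) :
    ∃ t, I.pts t = p := by
  classical
  set T : Finset (Fin (n+1)) := Finset.univ.filter (fun t => I.pts t ≤ p) with hT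
  have hTne : T.Nonempty := ⟨0, by simp [hT, I.first, hp]⟩
  obtain ⟨t, htT, htmax⟩ := T.exists_max_image id hTne
  have htp : I.pts t ≤ p := by simpa [hT] using htT
  have hti : t < i := by
    by_contra hle
    push_neg at hle
    have := I.mono.monotone hle
    linarith
  have htvn : t.val < n := by
    have hin := i.isLt
    rw [Fin.lt_def] at hti
    omega
  set u : Fin n := ⟨t.val, htvn⟩ with hu
  have hucast : u.castSucc = t := by
    apply Fin.ext; rfl
  have husuccv : (u.succ : Fin (n+1)).val = t.val + 1 := rfl
  have hsucc_gt : t < u.succ := by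
    rw [Fin.lt_def, husuccv]; omega
  have hsucc_not : ¬ I.pts u.succ ≤ p := by
    intro hle
    have : u.succ ≤ t := htmax u.succ (by simp [hT, hle])
    exact absurd this (not_le.mpr hsucc_gt)
  push_neg at hsucc_not
  have hile : u.succ ≤ i := by
    rw [Fin.le_def, husuccv]
    rw [Fin.lt_def] at hti
    omega
  have hicast : I.pts u.succ ≤ I.pts i := I.mono.monotone hile
  have hleaf := I.sd u
  rw [hucast] at hleaf
  have hij' : I.pts i < I.pts j := I.mono hij
  rcases sd_dich (A := (p, I.pts j)) (B := (I.pts t, I.pts u.succ)) hsd hleaf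
    with h1 | h2 | ⟨h3a, h3b⟩ | ⟨h4a, h4b⟩
  · simp only at h1; linarith
  · simp only at h2; linarith
  · exact ⟨t, le_antisymm htp h3a⟩
  · simp only at h4a h4b
    have : I.pts u.succ < I.pts j := lt_of_le_of_lt hicast hij'
    linarith

/-- The conjugate and the parent of a non-top interval of `S(I)` are in `S(I)`. -/
lemma conj_parent_mem {A : ℚ × ℚ} (hA : A ∈ SIn I) (hne : A ≠ ((0:ℚ),(1:ℚ))) :
    conjSD A ∈ SIn I ∧ sdJoin A (conjSD A) ∈ SIn I := by
  obtain ⟨⟨i, j, hij, hAe⟩, hsd⟩ := hA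
  obtain ⟨hCsd, hcc, hlen, hCne, hCnetop, hjsd, hLR, hRL⟩ := conj_sd_package hsd hne
  have hij' : I.pts i < I.pts j := I.mono hij
  by_cases hL : IsLeftSD A.1 A.2
  · have hconj : conjSD A = (A.2, 2*A.2 - A.1) := by
      obtain ⟨l, r⟩ := A
      exact conj_eq_left hL
    have hjoin : sdJoin A (conjSD A) = (A.1, 2*A.2 - A.1) := by
      rw [hconj]
      simp only [sdJoin]
      have := sd_lt hsd
      rw [min_eq_left (le_of_lt this), max_eq_right (by linarith)]
    rw [hjoin] at hjsd
    simp only at hjsd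
    have h1 : A.1 = I.pts i := by rw [hAe]
    have h2 : A.2 = I.pts j := by rw [hAe]
    have hsd2 : IsSD (I.pts i) (2*A.2 - A.1) := h1 ▸ hjsd
    have hple : 2*A.2 - A.1 ≤ 1 := sd_le_one hsd2
    have hjlt : I.pts j < 2*A.2 - A.1 := by
      rw [← h2]
      have := sd_lt hsd
      linarith
    obtain ⟨t, ht⟩ := right_end_breakpoint hij hple hjlt hsd2
    constructor
    · rw [mem_SIn_iff, hconj]
      exact ⟨by rw [← hconj]; exact hCsd, ⟨j, h2.symm⟩, ⟨t, ht⟩⟩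
    · rw [mem_SIn_iff, hjoin]
      exact ⟨hjsd, ⟨i, h1.symm⟩, ⟨t, ht⟩⟩
  · have hconj : conjSD A = (2*A.1 - A.2, A.1) := by
      obtain ⟨l, r⟩ := A
      exact conj_eq_right hL
    have hjoin : sdJoin A (conjSD A) = (2*A.1 - A.2, A.2) := by
      rw [hconj]
      simp only [sdJoin]
      have := sd_lt hsd
      rw [min_eq_right (by linarith), max_eq_left (by linarith)]
    rw [hjoin] at hjsd
    simp only at hjsd
    have h1 : A.1 = I.pts i := by rw [hAe]
    have h2 : A.2 = I.pts j := by rw [hAe]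
    have hsd2 : IsSD (2*A.1 - A.2) (I.pts j) := h2 ▸ hjsd
    have hple : 0 ≤ 2*A.1 - A.2 := sd_nonneg hsd2
    have hjlt : 2*A.1 - A.2 < I.pts i := by
      rw [← h1]
      have := sd_lt hsd
      linarith
    obtain ⟨t, ht⟩ := left_end_breakpoint hij hple hjlt hsd2
    constructor
    · rw [mem_SIn_iff, hconj]
      exact ⟨by rw [← hconj]; exact hCsd, ⟨t, ht⟩, ⟨i, h1.symm⟩⟩
    · rw [mem_SIn_iff, hjoin]
      exact ⟨hjsd, ⟨t, ht⟩, ⟨j, h2.symm⟩⟩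

end SD12
namespace SD12

variable {n : ℕ} {I : SDPartition n}

lemma children_sd {A : ℚ × ℚ} (hA : IsSD A.1 A.2) :
    IsSD A.1 (midQ A) ∧ IsSD (midQ A) A.2 ∧ A.1 < midQ A ∧ midQ A < A.2 := by
  obtain ⟨m, k, hk, hl, hr⟩ := hA
  have hmid : midQ A = ((2*k+1 : ℕ):ℚ)/2^(m+1) := by
    have : A = ((k:ℚ)/2^m, ((k:ℚ)+1)/2^m) := Prod.ext hl hr
    rw [this]
    exact midQ_formula rfl rfl
  have hL : IsSD A.1 (midQ A) := by
    refine ⟨m+1, 2*k, by omega, ?_, ?_⟩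
    · rw [hl, pow_succ]
      push_cast
      field_simp
    · rw [hmid]; push_cast; ring
  have hR : IsSD (midQ A) A.2 := by
    refine ⟨m+1, 2*k+1, by omega, ?_, ?_⟩
    · rw [hmid]
    · rw [hr, pow_succ]
      push_cast
      field_simp
      ring
  exact ⟨hL, hR, sd_lt hL, sd_lt hR⟩

/-- Midpoints of intervals of `S(I)` lie in `E(I)`. -/
lemma midQ_mem_EIn {A : ℚ × ℚ} (hA : A ∈ SIn I) : midQ A ∈ EIn I := by
  obtain ⟨⟨i, j, hij, hAe⟩, hsd⟩ := hA
  obtain ⟨hcL, hcR, hc1, hc2⟩ := children_sd hsd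
  have h1 : A.1 = I.pts i := by rw [hAe]
  have h2 : A.2 = I.pts j := by rw [hAe]
  have hivn : i.val < n := by
    have := j.isLt
    rw [Fin.lt_def] at hij
    omega
  have hu0c : (⟨i.val, hivn⟩ : Fin n).castSucc = i := Fin.ext rfl
  have hleaf0 := I.sd ⟨i.val, hivn⟩
  rw [hu0c] at hleaf0
  have hsuccval : ((⟨i.val, hivn⟩ : Fin n).succ : Fin (n+1)).val = i.val + 1 := rfl
  have hsuccgt : i < (⟨i.val, hivn⟩ : Fin n).succ := by
    rw [Fin.lt_def, hsuccval]; omega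
  have hsucc_pts : I.pts i < I.pts (⟨i.val, hivn⟩ : Fin n).succ := I.mono hsuccgt
  by_cases hjs : j.val = i.val + 1
  · left
    refine ⟨⟨i.val, hivn⟩, ?_⟩
    have hje : (⟨i.val, hivn⟩ : Fin n).succ = j := Fin.ext (by rw [hsuccval]; omega)
    rw [hu0c, hje, ← hAe]
  · have hij2 : i.val + 1 < j.val := by
      rw [Fin.lt_def] at hij
      omega
    have hsdlt : A.1 < A.2 := sd_lt hsd
    have hcbp : ∃ t, I.pts t = midQ A := by
      have hstep : I.pts (⟨i.val, hivn⟩ : Fin n).succ ≤ midQ A := by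
        rcases sd_dich (A := (A.1, midQ A)) (B := (I.pts i, I.pts (⟨i.val, hivn⟩ : Fin n).succ))
          hcL hleaf0 with hx | hx | ⟨hxa, hxb⟩ | ⟨hxa, hxb⟩
        · simp only at hx
          rw [← h1] at hx
          linarith
        · exfalso
          simp only at hx
          rw [h1] at hx
          linarith
        · simp only at hxb
          exact hxb
        · simp only at hxa hxb
          rcases sd_dich (A := (midQ A, A.2)) (B := (I.pts i, I.pts (⟨i.val, hivn⟩ : Fin n).succ))
            hcR hleaf0 with hy | hy | ⟨hya, hyb⟩ | ⟨hya, hyb⟩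
        
          · simp only at hy
            exfalso
            rw [← h1] at hy
            linarith
          · simp only at hy
            exact hy
          · simp only at hya
            exfalso
            rw [← h1] at hya
            linarith
          · simp only at hya hyb
            exfalso
            rw [h2] at hyb
            have hji : j ≤ (⟨i.val, hivn⟩ : Fin n).succ := I.mono.le_iff_le.mp hyb
            rw [Fin.le_def, hsuccval] at hji
            omega
      rcases eq_or_lt_of_le hstep with heq | hlt
      · exact ⟨_, heq⟩
      · have hc_le_one : midQ A ≤ 1 := by
          have := pts_le_one I j
          rw [← h2] at this
          linarith
        have hsd2 : IsSD (I.pts i) (midQ A) := h1 ▸ hcL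
        exact right_end_breakpoint hsuccgt hc_le_one hlt hsd2
    right
    obtain ⟨t, ht⟩ := hcbp
    refine ⟨⟨t, ht⟩, ?_, ?_⟩
    · have : 0 ≤ A.1 := sd_nonneg hsd
      intro h0
      rw [h0] at hc1
      linarith
    · have : A.2 ≤ 1 := sd_le_one hsd
      intro h0
      rw [h0] at hc2
      linarith

/-- Extraction of the odd part of a positive dyadic rational in (0,1). -/
lemma dyadic_odd_rep {q0 k0 : ℕ} (hk0 : k0 ≠ 0) (hlt : (k0:ℚ)/2^q0 < 1) :
    ∃ m kk : ℕ, Odd kk ∧ 1 ≤ m ∧ m ≤ q0 ∧ kk < 2^m ∧ (k0:ℚ)/2^q0 = (kk:ℚ)/2^m := by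
  obtain ⟨v, kk, hnd, hrep⟩ := Nat.exists_eq_pow_mul_and_not_dvd hk0 2 (by norm_num)
  have hkko : Odd kk := Nat.odd_iff.mpr (by omega)
  have hkk0 : kk ≠ 0 := by rintro rfl; simp at hnd
  have hvq : v < q0 := by
    by_contra hge
    push_neg at hge
    have : (2:ℚ)^q0 ≤ 2^v := pow_le_pow_right₀ (by norm_num) hge
    have hbig : (1:ℚ) ≤ (k0:ℚ)/2^q0 := by
      rw [le_div_iff₀ (qpow_pos q0)]
      have : ((k0:ℕ):ℚ) = (2:ℚ)^v * kk := by rw [hrep]; push_cast; ring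
      rw [this]
      have hkk1 : (1:ℚ) ≤ (kk:ℚ) := by exact_mod_cast Nat.one_le_iff_ne_zero.mpr hkk0
      nlinarith [qpow_pos v, qpow_pos q0]
    linarith
  set m := q0 - v with hm
  have hq0 : q0 = m + v := by omega
  have heq : (k0:ℚ)/2^q0 = (kk:ℚ)/2^m := by
    rw [hrep, hq0]
    push_cast
    rw [pow_add]
    field_simp
  have hkklt : kk < 2^m := by
    by_contra hge
    push_neg at hge
    have : (1:ℚ) ≤ (kk:ℚ)/2^m := by
      rw [le_div_iff₀ (qpow_pos m)]
      have : ((2^m : ℕ):ℚ) ≤ kk := by exact_mod_cast hge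
      push_cast at this
      linarith
    rw [heq] at hlt
    linarith
  have hm1 : 1 ≤ m := by
    by_contra h0
    have : m = 0 := by omega
    rw [this] at hkklt
    omega
  exact ⟨m, kk, hkko, hm1, by omega, hkklt, heq⟩

/-- Descent: if `(a, a + 1/2^(m+d))` is in `S(I)` where `a = kk/2^m` (kk odd),
then some interval of `S(I)` has midpoint `a`. -/
lemma descent {m kk : ℕ} (hkko : Odd kk) (hm : 1 ≤ m) (hkk : kk < 2^m) :
    ∀ d : ℕ, ((((kk:ℚ)/2^m), ((kk:ℚ)/2^m + 1/2^(m+d))) ∈ SIn I) →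
    ∃ B ∈ SIn I, midQ B = (kk:ℚ)/2^m := by
  intro d
  induction d with
  | zero =>
    intro hmem
    set a := (kk:ℚ)/2^m with ha
    have hrep : IsSD a (a + 1/2^(m+0)) := by
      refine ⟨m, kk, hkk, rfl, ?_⟩
      simp only [Nat.add_zero]
      rw [ha]
      field_simp
    have hR : IsRightSD a (a + 1/2^(m+0)) :=
      Or.inr ⟨m, kk, hm, hkk, hkko, rfl, by simp only [Nat.add_zero]; rw [ha]; field_simp⟩
    have hnotL : ¬ IsLeftSD a (a + 1/2^(m+0)) := fun h => not_left_and_right h hR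
    have hne : ((a, a + 1/2^(m+0))) ≠ ((0:ℚ), (1:ℚ)) := by
      intro he
      have h0 := congrArg Prod.fst he
      simp only at h0
      have : (0:ℚ) < a := by
        rw [ha]
        have : 0 < (kk:ℚ) := by exact_mod_cast hkko.pos
        positivity
      linarith
    obtain ⟨_, hjoinmem⟩ := conj_parent_mem hmem hne
    refine ⟨_, hjoinmem, ?_⟩
    have hconj : conjSD (a, a + 1/2^(m+0)) = (2*a - (a + 1/2^(m+0)), a) :=
      conj_eq_right hnotL
    rw [show sdJoin (a, a + 1/2^(m+0)) (conjSD (a, a + 1/2^(m+0)))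
        = (2*a - (a + 1/2^(m+0)), a + 1/2^(m+0)) from by
      rw [hconj]
      simp only [sdJoin]
      have h1 : (0:ℚ) < 1/2^(m+0) := by positivity
      rw [min_eq_right (by linarith), max_eq_left (by linarith)]]
    simp only [midQ]
    ring
  | succ d ih =>
    intro hmem
    set a := (kk:ℚ)/2^m with ha
    set p := m + (d+1) with hp
    have ha1 : a < 1 := by
      rw [ha, div_lt_one (qpow_pos m)]
      exact_mod_cast hkk
    have ha0 : (0:ℚ) < a := by
      have : 0 < (kk:ℚ) := by exact_mod_cast hkko.pos
      rw [ha]; positivity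
    have hkey : (2:ℚ)^p = 2^m * 2^(d+1) := by rw [hp, pow_add]
    have haL : a = ((kk * 2^(d+1) : ℕ):ℚ)/2^p := by
      rw [ha, hkey]
      push_cast
      rw [mul_comm ((2:ℚ)^m) _]
      field_simp
    have har : a + 1/2^p = (((kk * 2^(d+1) : ℕ) : ℚ) + 1)/2^p := by
      rw [haL]
      field_simp
    have hklt : kk * 2^(d+1) < 2^p := by
      have : (kk:ℚ) * 2^(d+1) < 2^p := by
        rw [hkey]
        have := qpow_pos (d+1)
        have hcast : (kk:ℚ) < 2^m := by exact_mod_cast hkk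
        have h2d : (0:ℚ) < (2:ℚ)^(d+1) := by positivity
        nlinarith
      exact_mod_cast this
    have hL : IsLeftSD a (a + 1/2^p) :=
      ⟨p, kk * 2^(d+1), by omega, hklt, ⟨kk * 2^d, by rw [pow_succ]; ring⟩, haL, har⟩
    have hne : ((a, a + 1/2^p)) ≠ ((0:ℚ), (1:ℚ)) := by
      intro he
      have h0 := congrArg Prod.fst he
      simp only at h0
      linarith
    obtain ⟨_, hjoinmem⟩ := conj_parent_mem hmem hne
    have hconj : conjSD (a, a + 1/2^p) = (a + 1/2^p, 2*(a + 1/2^p) - a) :=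
      conj_eq_left hL
    have hjoineq : sdJoin (a, a + 1/2^p) (conjSD (a, a + 1/2^p)) = (a, a + 1/2^(m+d)) := by
      rw [hconj]
      simp only [sdJoin]
      have h1 : (0:ℚ) < 1/2^p := by positivity
      rw [min_eq_left (by linarith), max_eq_right (by linarith)]
      have : 2*(a + 1/2^p) - a = a + 1/2^(m+d) := by
        have : (2:ℚ)^p = 2^(m+d) * 2 := by
          rw [hp, show m+(d+1) = (m+d)+1 from by omega, pow_succ]
        rw [this]
        field_simp
        ring
      rw [this]
    rw [hjoineq] at hjoinmem
    exact ih hjoinmem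

/-- Every point of `E(I)` is the midpoint of an interval of `S(I)`. -/
lemma EIn_subset_mid {q : ℚ} (hq : q ∈ EIn I) : ∃ B ∈ SIn I, midQ B = q := by
  rcases hq with ⟨u, hu⟩ | ⟨⟨t, ht⟩, hq0, hq1⟩
  · refine ⟨(I.pts u.castSucc, I.pts u.succ), ?_, hu.symm⟩
    rw [mem_SIn_iff]
    exact ⟨I.sd u, ⟨u.castSucc, rfl⟩, ⟨u.succ, rfl⟩⟩
  · -- q = pts t is an interior breakpoint
    have htlast : t ≠ Fin.last n := by
      intro he
      rw [he, I.last] at ht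
      exact hq1 ht.symm
    have htvn : t.val < n := by
      have := t.isLt
      have : t.val ≠ n := fun h => htlast (Fin.ext h)
      omega
    set u : Fin n := ⟨t.val, htvn⟩ with hu
    have hucast : u.castSucc = t := Fin.ext rfl
    have hleaf := I.sd u
    rw [hucast] at hleaf
    have hleafmem : (I.pts t, I.pts u.succ) ∈ SIn I := by
      rw [mem_SIn_iff]
      exact ⟨hleaf, ⟨t, rfl⟩, ⟨u.succ, rfl⟩⟩
    obtain ⟨q0, k0, hk0lt, hleft, hright⟩ := hleaf
    have hq0' : 0 < q := lt_of_le_of_ne (ht ▸ pts_nonneg I t) (Ne.symm hq0)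
    have hqlt1 : q < 1 := lt_of_le_of_ne (ht ▸ pts_le_one I t) hq1
    have hk00 : k0 ≠ 0 := by
      intro he
      rw [he] at hleft
      simp at hleft
      rw [ht] at hleft
      exact hq0 hleft
    have hlt1 : (k0:ℚ)/2^q0 < 1 := by rw [← hleft, ht]; exact hqlt1
    obtain ⟨m, kk, hkko, hm1, hmq, hkklt, heq⟩ := dyadic_odd_rep hk00 hlt1
    have hqeq : q = (kk:ℚ)/2^m := by rw [← ht, hleft, heq]
    have hlen : I.pts u.succ = (kk:ℚ)/2^m + 1/2^(m + (q0 - m)) := by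
      have : m + (q0 - m) = q0 := by omega
      rw [this, hright, ← heq]
      field_simp
    have hmem2 : (((kk:ℚ)/2^m), ((kk:ℚ)/2^m + 1/2^(m + (q0 - m)))) ∈ SIn I := by
      rw [← hlen, ← hqeq, ← ht]
      exact hleafmem
    obtain ⟨B, hB, hBmid⟩ := descent hkko hm1 hkklt (q0 - m) hmem2
    exact ⟨B, hB, by rw [hBmid, hqeq]⟩

end SD12
namespace SD12

variable {n : ℕ} {I : SDPartition n}

lemma npos (I : SDPartition n) : 1 ≤ n := by
  by_contra h
  have hn : n = 0 := by omega
  subst hn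
  have h1 := I.last
  rw [show Fin.last 0 = 0 from rfl, I.first] at h1
  norm_num at h1

lemma SIn_finite (I : SDPartition n) : (SIn I).Finite := by
  apply Set.Finite.subset ((Set.finite_range I.pts).prod (Set.finite_range I.pts))
  rintro A ⟨⟨i, j, hij, rfl⟩, -⟩
  exact ⟨⟨i, rfl⟩, ⟨j, rfl⟩⟩

lemma leafmid_strictMono (I : SDPartition n) :
    StrictMono (fun u : Fin n => midQ (I.pts u.castSucc, I.pts u.succ)) := by
  intro u v huv
  simp only [midQ]
  have h1 : I.pts u.succ ≤ I.pts v.castSucc := by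
    apply I.mono.monotone
    rw [Fin.le_def]
    simp only [Fin.val_succ, Fin.coe_castSucc]
    rw [Fin.lt_def] at huv
    omega
  have h2 : I.pts u.castSucc < I.pts u.succ := I.mono (Fin.castSucc_lt_succ_iff.mpr le_rfl)
  have h3 : I.pts v.castSucc < I.pts v.succ := I.mono (Fin.castSucc_lt_succ_iff.mpr le_rfl)
  linarith

lemma MIn_ncard (I : SDPartition n) : (MIn I).ncard = n := by
  have he : MIn I = Set.range (fun u : Fin n => midQ (I.pts u.castSucc, I.pts u.succ)) := by
    ext q
    simp [MIn, Set.mem_range, eq_comm]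
  rw [he, ← Set.image_univ,
    Set.ncard_image_of_injective _ (leafmid_strictMono I).injective,
    Set.ncard_univ]
  simp

lemma MIn_finite (I : SDPartition n) : (MIn I).Finite := by
  have he : MIn I = Set.range (fun u : Fin n => midQ (I.pts u.castSucc, I.pts u.succ)) := by
    ext q
    simp [MIn, Set.mem_range, eq_comm]
  rw [he]
  exact Set.finite_range _

lemma BIn_eq (I : SDPartition n) : {q : ℚ | (∃ i, I.pts i = q) ∧ q ≠ 0 ∧ q ≠ 1}
    = I.pts '' {i | i ≠ 0 ∧ i ≠ Fin.last n} := by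
  ext q
  constructor
  · rintro ⟨⟨i, rfl⟩, h0, h1⟩
    exact ⟨i, ⟨fun he => h0 (by rw [he, I.first]), fun he => h1 (by rw [he, I.last])⟩, rfl⟩
  · rintro ⟨i, ⟨hi0, hil⟩, rfl⟩
    refine ⟨⟨i, rfl⟩, ?_, ?_⟩
    · intro he
      exact hi0 (I.mono.injective (by rw [he, I.first]))
    · intro he
      exact hil (I.mono.injective (by rw [he, I.last]))

lemma BIn_ncard (I : SDPartition n) :
    {q : ℚ | (∃ i, I.pts i = q) ∧ q ≠ 0 ∧ q ≠ 1}.ncard = n - 1 := by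
  classical
  rw [BIn_eq I, Set.ncard_image_of_injective _ I.mono.injective]
  have h01 : (0 : Fin (n+1)) ≠ Fin.last n := by
    have := npos I
    intro he
    have h := congrArg Fin.val he
    simp [Fin.last] at h
    omega
  have hset : {i : Fin (n+1) | i ≠ 0 ∧ i ≠ Fin.last n}
      = (Set.univ \ {0, Fin.last n} : Set (Fin (n+1))) := by
    ext i
    simp only [Set.mem_setOf_eq, Set.mem_diff, Set.mem_univ, true_and,
      Set.mem_insert_iff, Set.mem_singleton_iff]
    tauto
  rw [hset, Set.ncard_diff (show ({0, Fin.last n} : Set (Fin (n+1))) ⊆ Set.univ from Set.subset_univ _)]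
  rw [Set.ncard_univ, Set.ncard_pair h01]
  simp

lemma BIn_finite (I : SDPartition n) :
    {q : ℚ | (∃ i, I.pts i = q) ∧ q ≠ 0 ∧ q ≠ 1}.Finite := by
  rw [BIn_eq I]
  exact (Set.toFinite _).image _

lemma EIn_disj (I : SDPartition n) :
    Disjoint (MIn I) {q : ℚ | (∃ i, I.pts i = q) ∧ q ≠ 0 ∧ q ≠ 1} := by
  rw [Set.disjoint_left]
  rintro q ⟨u, rfl⟩ ⟨⟨t, ht⟩, -, -⟩
  have h2 : I.pts u.castSucc < I.pts u.succ := I.mono (Fin.castSucc_lt_succ_iff.mpr le_rfl)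
  have hlo : I.pts u.castSucc < midQ (I.pts u.castSucc, I.pts u.succ) := by
    simp only [midQ]; linarith
  have hhi : midQ (I.pts u.castSucc, I.pts u.succ) < I.pts u.succ := by
    simp only [midQ]; linarith
  have : t ≤ u.castSucc ∨ u.succ ≤ t := by
    rw [Fin.le_def, Fin.le_def]
    simp only [Fin.val_succ, Fin.coe_castSucc]
    omega
  rcases this with hcase | hcase
  · have := I.mono.monotone hcase
    rw [ht] at this
    linarith
  · have := I.mono.monotone hcase
    rw [ht] at this
    linarith

lemma EIn_ncard (I : SDPartition n) : (EIn I).ncard = 2*n - 1 := by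
  rw [EIn, Set.ncard_union_eq (EIn_disj I) (MIn_finite I) (BIn_finite I),
    MIn_ncard I, BIn_ncard I]
  have := npos I
  omega

lemma SIn_ncard (I : SDPartition n) : (SIn I).ncard = 2*n - 1 := by
  have himg : midQ '' SIn I = EIn I := by
    apply Set.Subset.antisymm
    · rintro q ⟨A, hA, rfl⟩
      exact midQ_mem_EIn hA
    · intro q hq
      obtain ⟨B, hB, hm⟩ := EIn_subset_mid hq
      exact ⟨B, hB, hm⟩
  have hinj : Set.InjOn midQ (SIn I) := fun A hA B hB h => midQ_inj hA.2 hB.2 h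
  rw [← Set.ncard_image_of_injOn hinj, himg, EIn_ncard I]

lemma pos_ncard {s : ℚ × ℚ → ℤ} (hs : SignSpec s) (I : SDPartition n) :
    {A ∈ SIn I | s A = 1}.ncard = n := by
  classical
  set P := {A ∈ SIn I | s A = 1} with hP
  set N := {A ∈ SIn I | s A = -1} with hN
  have hPfin : P.Finite := (SIn_finite I).subset (fun A hA => hA.1)
  have hNfin : N.Finite := (SIn_finite I).subset (fun A hA => hA.1)
  have hunion : SIn I = P ∪ N := by
    apply Set.Subset.antisymm
    · intro A hA
      rcases hs.1 A hA.2 with h1 | h1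
      · exact Or.inl ⟨hA, h1⟩
      · exact Or.inr ⟨hA, h1⟩
    · rintro A (hA | hA) <;> exact hA.1
  have hdisj : Disjoint P N := by
    rw [Set.disjoint_left]
    rintro A ⟨-, h1⟩ ⟨-, h2⟩
    rw [h1] at h2
    norm_num at h2
  have hNne : ∀ A ∈ N, A ≠ ((0:ℚ), (1:ℚ)) := by
    rintro A ⟨-, h1⟩ he
    rw [he, hs.2.1] at h1
    norm_num at h1
  have himg : conjSD '' N = P \ {((0:ℚ), (1:ℚ))} := by
    apply Set.Subset.antisymm
    · rintro B ⟨A, hA, rfl⟩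
      have hAne := hNne A hA
      obtain ⟨hconjmem, -⟩ := conj_parent_mem hA.1 hAne
      have hsgn : s (conjSD A) = 1 := by
        rw [sign_flip hs hA.1.2 hAne, hA.2]
        norm_num
      have hnetop := (conj_sd_package hA.1.2 hAne).2.2.2.2.1
      exact ⟨⟨hconjmem, hsgn⟩, hnetop⟩
    · rintro B ⟨hBP, hBne⟩
      have hBne' : B ≠ ((0:ℚ), (1:ℚ)) := hBne
      obtain ⟨hconjmem, -⟩ := conj_parent_mem hBP.1 hBne'
      have hcc := (conj_sd_package hBP.1.2 hBne').2.1
      refine ⟨conjSD B, ⟨hconjmem, ?_⟩, hcc⟩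
      rw [sign_flip hs hBP.1.2 hBne', hBP.2]
  have hinjN : Set.InjOn conjSD N := by
    intro A hA B hB h
    have hcA := (conj_sd_package hA.1.2 (hNne A hA)).2.1
    have hcB := (conj_sd_package hB.1.2 (hNne B hB)).2.1
    rw [← hcA, ← hcB, h]
  have htopP : ((0:ℚ), (1:ℚ)) ∈ P := ⟨top_mem I, hs.2.1⟩
  have hNcard : N.ncard = P.ncard - 1 := by
    rw [← Set.ncard_image_of_injOn hinjN, himg,
      Set.ncard_diff_singleton_of_mem htopP]
  have hsum : P.ncard + N.ncard = 2*n - 1 := by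
    rw [← Set.ncard_union_eq hdisj hPfin hNfin, ← hunion, SIn_ncard I]
  have hPpos : 0 < P.ncard := (Set.ncard_pos hPfin).mpr ⟨_, htopP⟩
  have := npos I
  omega

end SD12
namespace SD12

variable {α : Type*} [LinearOrder α]

lemma rank_eq_filter {T : Set α} (hT : T.Finite) (x : α) :
    {z ∈ T | z < x}.ncard = (hT.toFinset.filter (· < x)).card := by
  classical
  have he : {z ∈ T | z < x} = ↑(hT.toFinset.filter (· < x)) := by
    ext z
    simp [Set.Finite.mem_toFinset]
  rw [he, Set.ncard_coe_finset]

lemma rank_lt_card {T : Set α} (hT : T.Finite) {x : α} (hx : x ∈ T) :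
    {z ∈ T | z < x}.ncard < T.ncard := by
  classical
  rw [rank_eq_filter hT x, Set.ncard_eq_toFinset_card T hT]
  apply Finset.card_lt_card
  rw [Finset.ssubset_iff_of_subset (Finset.filter_subset _ _)]
  exact ⟨x, hT.mem_toFinset.mpr hx, by simp⟩

lemma rank_injOn {T : Set α} (hT : T.Finite) {x y : α} (hx : x ∈ T) (hy : y ∈ T)
    (h : {z ∈ T | z < x}.ncard = {z ∈ T | z < y}.ncard) : x = y := by
  classical
  rw [rank_eq_filter hT x, rank_eq_filter hT y] at h
  rcases lt_trichotomy x y with hlt | heq | hlt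
  · exfalso
    have : (hT.toFinset.filter (· < x)).card < (hT.toFinset.filter (· < y)).card := by
      apply Finset.card_lt_card
      rw [Finset.ssubset_iff_of_subset
        (Finset.monotone_filter_right _ (fun z _ hz => lt_trans hz hlt))]
      exact ⟨x, by simp [hT.mem_toFinset.mpr hx, hlt], by simp⟩
    omega
  · exact heq
  · exfalso
    have : (hT.toFinset.filter (· < y)).card < (hT.toFinset.filter (· < x)).card := by
      apply Finset.card_lt_card
      rw [Finset.ssubset_iff_of_subset
        (Finset.monotone_filter_right _ (fun z _ hz => lt_trans hz hlt))]
      exact ⟨y, by simp [hT.mem_toFinset.mpr hy, hlt], by simp⟩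
    omega

lemma rank_surj {T : Set α} (hT : T.Finite) {j : ℕ} (hj : j < T.ncard) :
    ∃ x ∈ T, {z ∈ T | z < x}.ncard = j := by
  classical
  have hcard : T.ncard = hT.toFinset.card := Set.ncard_eq_toFinset_card T hT
  rw [hcard] at hj
  set e := hT.toFinset.orderIsoOfFin rfl with he
  set jf : Fin hT.toFinset.card := ⟨j, hj⟩ with hjf
  refine ⟨(e jf : α), hT.mem_toFinset.mp (e jf).2, ?_⟩
  have heq : {z ∈ T | z < (e jf : α)}
      = ↑((Finset.Iio jf).image (fun i => (e i : α))) := by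
    ext z
    simp only [Set.mem_setOf_eq, Finset.coe_image, Set.mem_image, Finset.mem_coe,
      Finset.mem_Iio]
    constructor
    · rintro ⟨hzT, hzlt⟩
      have hzs : z ∈ hT.toFinset := hT.mem_toFinset.mpr hzT
      refine ⟨e.symm ⟨z, hzs⟩, ?_, by simp⟩
      rw [← e.lt_iff_lt, OrderIso.apply_symm_apply]
      exact Subtype.mk_lt_mk.mpr hzlt
    · rintro ⟨i, hij, rfl⟩
      refine ⟨hT.mem_toFinset.mp (e i).2, ?_⟩
      have := e.strictMono hij
      exact Subtype.coe_lt_coe.mpr this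
  rw [heq, Set.ncard_coe_finset,
    Finset.card_image_of_injective _ (fun a b hab => e.injective (Subtype.ext hab)),
    Fin.card_Iio]

end SD12
namespace SD12

variable {n : ℕ} {I : SDPartition n}

/-- The lexicographic embedding used for the length order. -/
noncomputable def phiL (A : ℚ × ℚ) : ℚ ×ₗ ℚ := toLex (lenQ A, midQ A)

lemma lenLT_iff_phiL (A B : ℚ × ℚ) : lenLT A B ↔ phiL A < phiL B := by
  rw [phiL, phiL, Prod.Lex.lt_iff]
  rfl

lemma phiL_injOn : Set.InjOn phiL (SDSet) := by
  intro A hA B hB h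
  rw [phiL, phiL] at h
  have h2 : (lenQ A, midQ A) = (lenQ B, midQ B) := toLex.injective h
  exact midQ_inj hA hB (congrArg Prod.snd h2)

lemma px_eq (I : SDPartition n) (A : ℚ × ℚ) :
    px I A = {z ∈ midQ '' SIn I | z < midQ A}.ncard + 2 := by
  unfold px
  congr 1
  have himg : midQ '' {B ∈ SIn I | midQ B < midQ A} = {z ∈ midQ '' SIn I | z < midQ A} := by
    ext z
    constructor
    · rintro ⟨B, ⟨hB, hlt⟩, rfl⟩
      exact ⟨⟨B, hB, rfl⟩, hlt⟩
    · rintro ⟨⟨B, hB, rfl⟩, hlt⟩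
      exact ⟨B, ⟨hB, hlt⟩, rfl⟩
  rw [← himg, Set.ncard_image_of_injOn
    (fun B hB C hC h => midQ_inj hB.1.2 hC.1.2 h)]

lemma pyPos_eq {s : ℚ × ℚ → ℤ} (I : SDPartition n) (A : ℚ × ℚ) :
    pyPos I s A = {z ∈ phiL '' {B ∈ SIn I | s B = 1} | z < phiL A}.ncard + 1 := by
  unfold pyPos
  congr 1
  have himg : phiL '' {B ∈ SIn I | s B = 1 ∧ lenLT B A}
      = {z ∈ phiL '' {B ∈ SIn I | s B = 1} | z < phiL A} := by
    ext z
    constructor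
    · rintro ⟨B, ⟨hB, hs1, hlt⟩, rfl⟩
      exact ⟨⟨B, ⟨hB, hs1⟩, rfl⟩, (lenLT_iff_phiL B A).mp hlt⟩
    · rintro ⟨⟨B, ⟨hB, hs1⟩, rfl⟩, hlt⟩
      exact ⟨B, ⟨hB, hs1, (lenLT_iff_phiL B A).mpr hlt⟩, rfl⟩
  rw [← himg, Set.ncard_image_of_injOn
    (fun B hB C hC h => phiL_injOn hB.1.2 hC.1.2 h)]

-- abbreviations
lemma midT_finite (I : SDPartition n) : (midQ '' SIn I).Finite := (SIn_finite I).image _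

lemma midT_ncard (I : SDPartition n) : (midQ '' SIn I).ncard = 2*n - 1 := by
  rw [Set.ncard_image_of_injOn (fun A hA B hB h => midQ_inj hA.2 hB.2 h), SIn_ncard I]

lemma px_ge (I : SDPartition n) (A : ℚ × ℚ) : 2 ≤ px I A := by
  rw [px_eq]; omega

lemma px_le {A : ℚ × ℚ} (hA : A ∈ SIn I) : px I A ≤ 2*n := by
  rw [px_eq]
  have hrank := rank_lt_card (midT_finite I) (Set.mem_image_of_mem midQ hA)
  rw [midT_ncard I] at hrank
  have := npos I
  omega

lemma px_injOn : ∀ A ∈ SIn I, ∀ B ∈ SIn I, px I A = px I B → A = B := by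
  intro A hA B hB h
  rw [px_eq, px_eq] at h
  have h' := Nat.add_right_cancel h
  have hmid := rank_injOn (midT_finite I) (Set.mem_image_of_mem midQ hA)
    (Set.mem_image_of_mem midQ hB) h'
  exact midQ_inj hA.2 hB.2 hmid

lemma px_surj {col : ℕ} (hcol1 : 2 ≤ col) (hcol2 : col ≤ 2*n) :
    ∃ A ∈ SIn I, px I A = col := by
  have hj : col - 2 < (midQ '' SIn I).ncard := by
    rw [midT_ncard I]
    have := npos I
    omega
  obtain ⟨z, hz, hrank⟩ := rank_surj (midT_finite I) hj
  obtain ⟨A, hA, rfl⟩ := hz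
  refine ⟨A, hA, ?_⟩
  rw [px_eq, hrank]
  omega

section PY

variable {s : ℚ × ℚ → ℤ}

lemma posT_finite (I : SDPartition n) (s : ℚ × ℚ → ℤ) :
    (phiL '' {B ∈ SIn I | s B = 1}).Finite :=
  ((SIn_finite I).subset (fun A hA => hA.1)).image _

lemma posT_ncard (hs : SignSpec s) (I : SDPartition n) :
    (phiL '' {B ∈ SIn I | s B = 1}).ncard = n := by
  rw [Set.ncard_image_of_injOn (fun A hA B hB h => phiL_injOn hA.1.2 hB.1.2 h),
    pos_ncard hs I]

lemma pyPos_ge (I : SDPartition n) (A : ℚ × ℚ) : 1 ≤ pyPos I s A := by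
  rw [pyPos_eq]; omega

lemma pyPos_le (hs : SignSpec s) {A : ℚ × ℚ} (hA : A ∈ SIn I) (hA1 : s A = 1) :
    pyPos I s A ≤ n := by
  rw [pyPos_eq]
  have hrank := rank_lt_card (posT_finite I s)
    (Set.mem_image_of_mem phiL (⟨hA, hA1⟩ : A ∈ {B ∈ SIn I | s B = 1}))
  rw [posT_ncard hs I] at hrank
  omega

lemma pyPos_injOn (hs : SignSpec s) {A B : ℚ × ℚ} (hA : A ∈ SIn I) (hA1 : s A = 1)
    (hB : B ∈ SIn I) (hB1 : s B = 1) (h : pyPos I s A = pyPos I s B) : A = B := by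
  rw [pyPos_eq, pyPos_eq] at h
  have h' := Nat.add_right_cancel h
  have hphi := rank_injOn (posT_finite I s)
    (Set.mem_image_of_mem phiL (⟨hA, hA1⟩ : A ∈ {B ∈ SIn I | s B = 1}))
    (Set.mem_image_of_mem phiL (⟨hB, hB1⟩ : B ∈ {C ∈ SIn I | s C = 1})) h'
  exact phiL_injOn hA.2 hB.2 hphi

lemma pyPos_surj (hs : SignSpec s) {row : ℕ} (hrow1 : 1 ≤ row) (hrow2 : row ≤ n) :
    ∃ A ∈ SIn I, s A = 1 ∧ pyPos I s A = row := by
  have hj : row - 1 < (phiL '' {B ∈ SIn I | s B = 1}).ncard := by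
    rw [posT_ncard hs I]
    omega
  obtain ⟨z, hz, hrank⟩ := rank_surj (posT_finite I s) hj
  obtain ⟨A, ⟨hA, hA1⟩, rfl⟩ := hz
  refine ⟨A, hA, hA1, ?_⟩
  rw [pyPos_eq, hrank]
  omega

lemma pyPos_top (hs : SignSpec s) (I : SDPartition n) :
    pyPos I s ((0:ℚ), (1:ℚ)) = n := by
  rw [pyPos_eq]
  have heq : {z ∈ phiL '' {B ∈ SIn I | s B = 1} | z < phiL ((0:ℚ), (1:ℚ))}
      = phiL '' ({B ∈ SIn I | s B = 1} \ {((0:ℚ), (1:ℚ))}) := by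
    ext z
    constructor
    · rintro ⟨⟨B, hB, rfl⟩, hlt⟩
      refine ⟨B, ⟨hB, ?_⟩, rfl⟩
      intro he
      rw [he] at hlt
      exact lt_irrefl _ hlt
    · rintro ⟨B, ⟨hB, hBne⟩, rfl⟩
      refine ⟨⟨B, hB, rfl⟩, ?_⟩
      rw [← lenLT_iff_phiL]
      left
      rw [lenQ_top]
      exact lenQ_lt_one hB.1.2 hBne
  rw [heq, Set.ncard_image_of_injOn (fun A hA B hB h => phiL_injOn hA.1.1.2 hB.1.1.2 h),
    Set.ncard_diff_singleton_of_mem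
      (show ((0:ℚ),(1:ℚ)) ∈ {B ∈ SIn I | s B = 1} from ⟨top_mem I, hs.2.1⟩)
      , pos_ncard hs I]
  have := npos I
  omega

lemma pyPos_lt_top (hs : SignSpec s) {A : ℚ × ℚ} (hA : A ∈ SIn I) (hA1 : s A = 1)
    (hAne : A ≠ ((0:ℚ), (1:ℚ))) : pyPos I s A < n := by
  have hle := pyPos_le hs hA hA1
  rcases Nat.lt_or_ge (pyPos I s A) n with h | h
  · exact h
  · exfalso
    have heq : pyPos I s A = pyPos I s ((0:ℚ),(1:ℚ)) := by
      rw [pyPos_top hs I]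
      omega
    exact hAne (pyPos_injOn hs hA hA1 (top_mem I) hs.2.1 heq)

end PY

end SD12
namespace SD12

variable {n : ℕ} {I : SDPartition n} {s : ℚ × ℚ → ℤ}

lemma py_pos_mem (I : SDPartition n) (s : ℚ × ℚ → ℤ) {A : ℚ × ℚ} (hA1 : s A = 1) :
    py I s A = pyPos I s A := if_pos hA1

lemma py_neg_mem (I : SDPartition n) (s : ℚ × ℚ → ℤ) {A : ℚ × ℚ} (hA1 : s A = -1) :
    py I s A = pyPos I s (conjSD A) := if_neg (by rw [hA1]; norm_num)

lemma mem_facts (hs : SignSpec s) {A : ℚ × ℚ} (hA : A ∈ SIn I)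
    (hAne : A ≠ ((0:ℚ),(1:ℚ))) :
    conjSD A ∈ SIn I ∧ s (conjSD A) = - s A ∧ conjSD A ≠ ((0:ℚ),(1:ℚ)) ∧
      conjSD (conjSD A) = A := by
  obtain ⟨hc, -⟩ := conj_parent_mem hA hAne
  have hpk := conj_sd_package hA.2 hAne
  exact ⟨hc, sign_flip hs hA.2 hAne, hpk.2.2.2.2.1, hpk.2.1⟩

lemma neg_ne_top (hs : SignSpec s) {A : ℚ × ℚ} (hA1 : s A = -1) :
    A ≠ ((0:ℚ),(1:ℚ)) := by
  intro he
  rw [he, hs.2.1] at hA1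
  norm_num at hA1

lemma py_neg_bounds (hs : SignSpec s) {A : ℚ × ℚ} (hA : A ∈ SIn I) (hA1 : s A = -1) :
    1 ≤ py I s A ∧ py I s A < n := by
  have hAne := neg_ne_top hs hA1
  obtain ⟨hc, hsgn, hcne, hcc⟩ := mem_facts hs hA hAne
  have hsgn1 : s (conjSD A) = 1 := by rw [hsgn, hA1]; norm_num
  rw [py_neg_mem I s hA1]
  exact ⟨pyPos_ge I (conjSD A), pyPos_lt_top hs hc hsgn1 hcne⟩

end SD12


open SD12

/-- for a standard dyadic `n`-partition `I`, the diagram `H_I` is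
an `n × 2n` half grid diagram: all markings lie in the `n × 2n` grid, no cell
carries two markings, each column contains exactly one marking, and each row
contains exactly one `X` and exactly one `O`. -/
theorem statement_12 {n : ℕ} (I : SDPartition n) (s : ℚ × ℚ → ℤ)
    (hs : SignSpec s) :
    (∀ c ∈ Xcells I s ∪ Ocells I s,
      1 ≤ c.1 ∧ c.1 ≤ 2 * n ∧ 1 ≤ c.2 ∧ c.2 ≤ n) ∧
    Xcells I s ∩ Ocells I s = ∅ ∧
    (∀ col : ℕ, 1 ≤ col → col ≤ 2 * n →
      ∃! row : ℕ, (col, row) ∈ Xcells I s ∪ Ocells I s) ∧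
    (∀ row : ℕ, 1 ≤ row → row ≤ n →
      (∃! col : ℕ, (col, row) ∈ Xcells I s) ∧
      (∃! col : ℕ, (col, row) ∈ Ocells I s)) := by
  have hn := npos I
  refine ⟨?_, ?_, ?_, ?_⟩
  · -- bounds
    rintro c (⟨A, hA, hA1, rfl⟩ | hc)
    · refine ⟨by have := px_ge I A; omega, px_le hA, ?_, ?_⟩
      · rw [py_pos_mem I s hA1]
        exact pyPos_ge I A
      · rw [py_pos_mem I s hA1]
        exact pyPos_le hs hA hA1
    · rcases hc with hc | ⟨A, hA, hA1, rfl⟩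
      · rw [hc]
        exact ⟨le_refl 1, by omega, hn, le_refl n⟩
      · obtain ⟨hb1, hb2⟩ := py_neg_bounds hs hA hA1
        exact ⟨by have := px_ge I A; omega, px_le hA, hb1, by omega⟩
  · -- empty intersection
    rw [Set.eq_empty_iff_forall_notMem]
    rintro c ⟨⟨A, hA, hA1, rfl⟩, hO⟩
    rcases hO with hO | ⟨B, hB, hB1, hO⟩
    · have h1 : px I A = 1 := congrArg Prod.fst hO
      have := px_ge I A
      omega
    · have h1 : px I A = px I B := congrArg Prod.fst hO
      have hAB : A = B := px_injOn A hA B hB h1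
      rw [hAB, hB1] at hA1
      norm_num at hA1
  · -- columns
    intro col hcol1 hcol2
    rcases Nat.lt_or_ge col 2 with hc2 | hc2
    · have hcol : col = 1 := by omega
      subst hcol
      refine ⟨n, Or.inr (Or.inl rfl), ?_⟩
      rintro y (⟨A, hA, hA1, hy⟩ | hy | ⟨A, hA, hA1, hy⟩)
      · have h1 : (1:ℕ) = px I A := congrArg Prod.fst hy
        have := px_ge I A
        omega
      · exact (Prod.ext_iff.mp hy).2
      · have h1 : (1:ℕ) = px I A := congrArg Prod.fst hy
        have := px_ge I A
        omega
    · obtain ⟨A, hA, hpx⟩ := px_surj (I := I) hc2 hcol2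
      rcases hs.1 A hA.2 with hA1 | hA1
      · refine ⟨py I s A, Or.inl ⟨A, hA, hA1, by rw [hpx]⟩, ?_⟩
        rintro y (⟨B, hB, hB1, hy⟩ | hy | ⟨B, hB, hB1, hy⟩)
        · have h1 : col = px I B := congrArg Prod.fst hy
          have hBA : B = A := px_injOn B hB A hA (by omega)
          have h2 : y = py I s B := congrArg Prod.snd hy
          rw [h2, hBA]
        · exfalso
          have h1 : col = 1 := congrArg Prod.fst hy
          omega
        · exfalso
          have h1 : col = px I B := congrArg Prod.fst hy
          have hBA : B = A := px_injOn B hB A hA (by omega)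
          rw [hBA, hA1] at hB1
          norm_num at hB1
      · refine ⟨py I s A, Or.inr (Or.inr ⟨A, hA, hA1, by rw [hpx]⟩), ?_⟩
        rintro y (⟨B, hB, hB1, hy⟩ | hy | ⟨B, hB, hB1, hy⟩)
        · exfalso
          have h1 : col = px I B := congrArg Prod.fst hy
          have hBA : B = A := px_injOn B hB A hA (by omega)
          rw [hBA, hA1] at hB1
          norm_num at hB1
        · exfalso
          have h1 : col = 1 := congrArg Prod.fst hy
          omega
        · have h1 : col = px I B := congrArg Prod.fst hy
          have hBA : B = A := px_injOn B hB A hA (by omega)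
          have h2 : y = py I s B := congrArg Prod.snd hy
          rw [h2, hBA]
  · -- rows
    intro row hrow1 hrow2
    constructor
    · -- unique X
      obtain ⟨A, hA, hA1, hpy⟩ := pyPos_surj hs hrow1 hrow2
      refine ⟨px I A, ⟨A, hA, hA1, by rw [py_pos_mem I s hA1, hpy]⟩, ?_⟩
      rintro y ⟨B, hB, hB1, hy⟩
      have h2 : row = py I s B := congrArg Prod.snd hy
      rw [py_pos_mem I s hB1] at h2
      have hBA : B = A := pyPos_injOn hs hB hB1 hA hA1 (by omega)
      have h1 : y = px I B := congrArg Prod.fst hy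
      rw [h1, hBA]
    · -- unique O
      by_cases hrn : row = n
      · subst hrn
        refine ⟨1, Or.inl rfl, ?_⟩
        rintro y (hy | ⟨B, hB, hB1, hy⟩)
        · exact (Prod.ext_iff.mp hy).1
        · exfalso
          have h2 : row = py I s B := congrArg Prod.snd hy
          have := (py_neg_bounds hs hB hB1).2
          omega
      · have hrowlt : row < n := by omega
        obtain ⟨A, hA, hA1, hpy⟩ := pyPos_surj hs hrow1 hrow2
        have hAne : A ≠ ((0:ℚ),(1:ℚ)) := by
          intro he
          rw [he, pyPos_top hs I] at hpy
          omega
        obtain ⟨hc, hsgn, hcne, hcc⟩ := mem_facts hs hA hAne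
        have hcneg : s (conjSD A) = -1 := by rw [hsgn, hA1]
        refine ⟨px I (conjSD A), Or.inr ⟨conjSD A, hc, hcneg, ?_⟩, ?_⟩
        · rw [py_neg_mem I s hcneg, hcc, hpy]
        · rintro y (hy | ⟨C, hC, hC1, hy⟩)
          · exfalso
            have h2 : row = n := (Prod.ext_iff.mp hy).2
            omega
          · have h2 : row = py I s C := congrArg Prod.snd hy
            rw [py_neg_mem I s hC1] at h2
            have hCne := neg_ne_top hs hC1
            obtain ⟨hcC, hsgnC, hcneC, hccC⟩ := mem_facts hs hC hCne
            have hcCpos : s (conjSD C) = 1 := by rw [hsgnC, hC1]; norm_num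
            have hCA : conjSD C = A := pyPos_injOn hs hcC hcCpos hA hA1 (by omega)
            have hCeq : C = conjSD A := by rw [← hCA, hccC]
            have h1 : y = px I C := congrArg Prod.fst hy
            rw [h1, hCeq]
end

section
/- Let (I, J) be a pair of standard dyadic n-partitions such that γ^I_J preserves signs on E. List S(I) in increasing midpoint order as A_1 <_mid ... <_mid A_{2n−1} and S(J) as B_1 <_mid ... <_mid B_{2n−1}. Then s(A_i) = s(B_i) for every i; consequently the half grid diagrams H_I and H_J are compatible (for each column index, the unique markings of H_I and H_J in that column are the same symbol). -/
/-- `IsGamma I J γ` says that `γ = γ^I_J`: the piecewise linear map sending the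
`i`-th breakpoint of `I` to the `i`-th breakpoint of `J` and linear on each
subinterval of `I`. -/
def IsGamma {n : ℕ} (I J : SDPartition n) (γ : ℚ → ℚ) : Prop :=
  ∀ i : Fin n, ∀ x : ℚ, I.pts i.castSucc ≤ x → x ≤ I.pts i.succ →
    γ x = J.pts i.castSucc +
      (J.pts i.succ - J.pts i.castSucc) / (I.pts i.succ - I.pts i.castSucc) *
        (x - I.pts i.castSucc)

/-- `γ` preserves signs on `E`: `γ(E) = E` and every `e ∈ E` has the same sign
as `γ e`, where the sign of a point of `E` is the sign of the unique standard
dyadic interval having it as midpoint. -/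
def PreservesSigns (s : ℚ × ℚ → ℤ) (γ : ℚ → ℚ) : Prop :=
  γ '' Edyadic = Edyadic ∧
  ∀ A B : ℚ × ℚ, A ∈ SDSet → B ∈ SDSet → γ (midQ A) = midQ B → s B = s A

namespace Statement15Aux

variable {n : ℕ}

/-- Extension of the breakpoint sequence to all of `ℕ`. -/
def P (I : SDPartition n) (t : ℕ) : ℚ :=
  I.pts ⟨min t n, Nat.lt_succ_of_le (min_le_right t n)⟩

lemma P_eq (I : SDPartition n) (i : Fin (n + 1)) : P I i = I.pts i := by
  unfold P
  congr 1
  exact Fin.ext (by simpa using Nat.le_of_lt_succ i.isLt)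

lemma P_mono (I : SDPartition n) : Monotone (P I) := by
  intro s t hst
  exact I.mono.monotone (by simp [Fin.le_def]; omega)

lemma P_lt (I : SDPartition n) {s t : ℕ} (h : s < t) (ht : t ≤ n) :
    P I s < P I t := by
  apply I.mono
  simp [Fin.lt_def]
  omega

/-- The interleaved sequence of breakpoints and midpoints. -/
def pI (I : SDPartition n) (k : ℕ) : ℚ := (P I (k / 2) + P I ((k + 1) / 2)) / 2

lemma pI_even (I : SDPartition n) (l : ℕ) : pI I (2 * l) = P I l := by
  unfold pI
  have h1 : 2 * l / 2 = l := by omega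
  have h2 : (2 * l + 1) / 2 = l := by omega
  rw [h1, h2]; ring

lemma pI_strict (I : SDPartition n) {k k' : ℕ} (h : k < k') (hk' : k' ≤ 2 * n) :
    pI I k < pI I k' := by
  unfold pI
  have hb : k' / 2 ≤ n ∧ (k' + 1) / 2 ≤ n := by omega
  have h1 : k / 2 ≤ k' / 2 := by omega
  have h2 : (k + 1) / 2 ≤ (k' + 1) / 2 := by omega
  have h3 : k / 2 < k' / 2 ∨ (k + 1) / 2 < (k' + 1) / 2 := by omega
  rcases h3 with h3 | h3
  · have := P_lt I h3 hb.1
    have := P_mono I h2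
    linarith
  · have := P_lt I h3 hb.2
    have := P_mono I h1
    linarith

lemma pI_lt_iff (I : SDPartition n) {k k' : ℕ} (hk : k ≤ 2 * n) (hk' : k' ≤ 2 * n) :
    pI I k < pI I k' ↔ k < k' := by
  constructor
  · intro h
    by_contra hc
    push_neg at hc
    rcases eq_or_lt_of_le hc with rfl | hlt
    · exact lt_irrefl _ h
    · exact absurd (pI_strict I hlt hk) (not_lt.mpr h.le)
  · intro h; exact pI_strict I h hk'

lemma gamma_pI {I J : SDPartition n} {γ : ℚ → ℚ} (hγ : IsGamma I J γ)
    {k : ℕ} (hk : k ≤ 2 * n) (hn : 1 ≤ n) : γ (pI I k) = pI J k := by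
  rcases Nat.even_or_odd k with ⟨l, rfl⟩ | ⟨l, rfl⟩
  · -- k = l + l = 2l : a breakpoint
    have hll : l + l = 2 * l := by ring
    rw [hll, pI_even, pI_even]
    by_cases hl : l < n
    · set i : Fin n := ⟨l, hl⟩
      have hPI : P I l = I.pts i.castSucc := by
        unfold P; congr 1; exact Fin.ext (by simp [i]; omega)
      have hPJ : P J l = J.pts i.castSucc := by
        unfold P; congr 1; exact Fin.ext (by simp [i]; omega)
      rw [hPI, hPJ]
      have := hγ i (I.pts i.castSucc) le_rfl (le_of_lt (I.mono Fin.castSucc_lt_succ))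
      rw [this]; ring
    · have hln : l = n := by omega
      rw [hln]
      set i : Fin n := ⟨n - 1, by omega⟩
      have hsucc : (i.succ : Fin (n+1)) = Fin.last n := Fin.ext (by simp [i]; omega)
      have hPI : P I n = I.pts i.succ := by
        unfold P; congr 1; exact Fin.ext (by simp [i]; omega)
      have hPJ : P J n = J.pts i.succ := by
        unfold P; congr 1; exact Fin.ext (by simp [i]; omega)
      rw [hPI, hPJ]
      have hlt : I.pts i.castSucc < I.pts i.succ := I.mono Fin.castSucc_lt_succ
      have := hγ i (I.pts i.succ) hlt.le le_rfl
      rw [this]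
      have hne : I.pts i.succ - I.pts i.castSucc ≠ 0 := by linarith
      rw [div_mul_cancel₀ _ hne]
      ring
  · -- k = 2l+1 : a midpoint
    have hl : l < n := by omega
    set i : Fin n := ⟨l, hl⟩
    have hd1 : (2 * l + 1) / 2 = l := by omega
    have hd2 : (2 * l + 1 + 1) / 2 = l + 1 := by omega
    have hPIc : P I l = I.pts i.castSucc := by
      unfold P; congr 1; exact Fin.ext (by simp [i]; omega)
    have hPIs : P I (l + 1) = I.pts i.succ := by
      unfold P; congr 1; exact Fin.ext (by simp [i]; omega)
    have hPJc : P J l = J.pts i.castSucc := by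
      unfold P; congr 1; exact Fin.ext (by simp [i]; omega)
    have hPJs : P J (l + 1) = J.pts i.succ := by
      unfold P; congr 1; exact Fin.ext (by simp [i]; omega)
    unfold pI
    rw [hd1, hd2, hPIc, hPIs, hPJc, hPJs]
    have hlt : I.pts i.castSucc < I.pts i.succ := I.mono Fin.castSucc_lt_succ
    have hle1 : I.pts i.castSucc ≤ (I.pts i.castSucc + I.pts i.succ) / 2 := by linarith
    have hle2 : (I.pts i.castSucc + I.pts i.succ) / 2 ≤ I.pts i.succ := by linarith
    have := hγ i _ hle1 hle2
    rw [this]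
    have hne : I.pts i.succ - I.pts i.castSucc ≠ 0 := by linarith
    field_simp
    ring

/-- `E(I)` is the set of interior interleaved points. -/
lemma EIn_eq (I : SDPartition n) :
    EIn I = pI I '' {k : ℕ | 1 ≤ k ∧ k < 2 * n} := by
  ext q
  constructor
  · rintro (⟨i, rfl⟩ | ⟨⟨i, rfl⟩, h0, h1⟩)
    · have hilt := i.isLt
      refine ⟨2 * (i : ℕ) + 1, ⟨by omega, by omega⟩, ?_⟩
      unfold pI
      have hd1 : (2 * (i : ℕ) + 1) / 2 = (i : ℕ) := by omega
      have hd2 : (2 * (i : ℕ) + 1 + 1) / 2 = (i : ℕ) + 1 := by omega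
      rw [hd1, hd2]
      have hPIc : P I (i : ℕ) = I.pts i.castSucc := by
        unfold P; congr 1; exact Fin.ext (by have := i.isLt; simp <;> omega)
      have hPIs : P I ((i : ℕ) + 1) = I.pts i.succ := by
        unfold P; congr 1; exact Fin.ext (by have := i.isLt; simp <;> omega)
      rw [hPIc, hPIs]
      simp [midQ]
    · have hi0 : (i : ℕ) ≠ 0 := by
        intro hc
        apply h0
        rw [← I.first]; congr 1; exact Fin.ext (by simpa using hc)
      have hin : (i : ℕ) ≠ n := by
        intro hc
        apply h1
        rw [← I.last]; congr 1; exact Fin.ext (by simpa [Fin.last] using hc)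
      have hi : (i : ℕ) < n := by have := i.isLt; omega
      refine ⟨2 * (i : ℕ), ⟨by omega, by omega⟩, ?_⟩
      rw [pI_even]
      unfold P; congr 1; exact Fin.ext (by simp <;> omega)
  · rintro ⟨k, ⟨hk1, hk2⟩, rfl⟩
    rcases Nat.even_or_odd k with ⟨l, rfl⟩ | ⟨l, rfl⟩
    · have hll : l + l = 2 * l := by ring
      have hl1 : 1 ≤ l := by omega
      have hln : l < n := by omega
      right
      rw [hll, pI_even]
      have hP : P I l = I.pts ⟨l, by omega⟩ := by
        unfold P; congr 1; exact Fin.ext (by simp <;> omega)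
      refine ⟨⟨⟨l, by omega⟩, hP.symm⟩, ?_, ?_⟩
      · rw [hP, ← I.first]
        have : I.pts 0 < I.pts ⟨l, by omega⟩ := I.mono (by simp [Fin.lt_def]; omega)
        exact (ne_of_gt this)
      · rw [hP, ← I.last]
        have : I.pts ⟨l, by omega⟩ < I.pts (Fin.last n) :=
          I.mono (by simp [Fin.lt_def, Fin.last]; omega)
        exact (ne_of_lt this)
    · have hl : l < n := by omega
      left
      refine ⟨⟨l, hl⟩, ?_⟩
      unfold pI
      have hd1 : (2 * l + 1) / 2 = l := by omega
      have hd2 : (2 * l + 1 + 1) / 2 = l + 1 := by omega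
      rw [hd1, hd2]
      have hPIc : P I l = I.pts (Fin.castSucc ⟨l, hl⟩) := by
        unfold P; congr 1; exact Fin.ext (by simp <;> omega)
      have hPIs : P I (l + 1) = I.pts (Fin.succ ⟨l, hl⟩) := by
        unfold P; congr 1; exact Fin.ext (by simp <;> omega)
      rw [hPIc, hPIs]
      simp [midQ]

/-- Core dyadic fact: if an s.d. interval `B` is contained in an s.d. interval
`A` and the midpoint of `A` lies strictly inside `B`, then `B = A`. -/
lemma dyadic_core {m k m' k' : ℕ} (hk : k < 2 ^ m) (hk' : k' < 2 ^ m')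
    (h1 : (k : ℚ) / 2 ^ m ≤ (k' : ℚ) / 2 ^ m')
    (h2 : ((k' : ℚ) + 1) / 2 ^ m' ≤ ((k : ℚ) + 1) / 2 ^ m)
    (h3 : (k' : ℚ) / 2 ^ m' < ((k : ℚ) / 2 ^ m + ((k : ℚ) + 1) / 2 ^ m) / 2)
    (h4 : ((k : ℚ) / 2 ^ m + ((k : ℚ) + 1) / 2 ^ m) / 2 < ((k' : ℚ) + 1) / 2 ^ m') :
    (k' : ℚ) / 2 ^ m' = (k : ℚ) / 2 ^ m ∧
      ((k' : ℚ) + 1) / 2 ^ m' = ((k : ℚ) + 1) / 2 ^ m := by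
  have hpm : (0 : ℚ) < 2 ^ m := by positivity
  have hpm' : (0 : ℚ) < 2 ^ m' := by positivity
  have hmm' : m ≤ m' := by
    have hlen : (1 : ℚ) / 2 ^ m' ≤ 1 / 2 ^ m := by
      have := sub_le_sub h2 h1
      have e1 : ((k' : ℚ) + 1) / 2 ^ m' - (k' : ℚ) / 2 ^ m' = 1 / 2 ^ m' := by ring
      have e2 : ((k : ℚ) + 1) / 2 ^ m - (k : ℚ) / 2 ^ m = 1 / 2 ^ m := by ring
      linarith [sub_le_sub h2 h1]
    have : (2 : ℚ) ^ m ≤ 2 ^ m' := by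
      rw [div_le_div_iff₀ hpm' hpm] at hlen
      linarith
    exact (pow_le_pow_iff_right₀ (by norm_num)).mp this
  rcases eq_or_lt_of_le hmm' with rfl | hlt
  · have hkk : (k : ℚ) = k' := by
      have ha : (k : ℚ) ≤ k' := by
        rw [div_le_div_iff₀ hpm hpm] at h1; nlinarith
      have hb : (k' : ℚ) ≤ k := by
        rw [div_le_div_iff₀ hpm hpm] at h2; nlinarith
      linarith
    rw [← hkk]
    exact ⟨rfl, rfl⟩
  · exfalso
    set d : ℕ := m' - m - 1 with hd
    have hm' : m' = m + 1 + d := by omega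
    have hmid : ((k : ℚ) / 2 ^ m + ((k : ℚ) + 1) / 2 ^ m) / 2
        = (2 * (k : ℚ) + 1) / 2 ^ (m + 1) := by
      rw [pow_succ]; field_simp; ring
    rw [hmid, hm'] at h3 h4
    have hpow : (2 : ℚ) ^ (m + 1 + d) = 2 ^ (m + 1) * 2 ^ d := by
      rw [pow_add]
    have hp1 : (0 : ℚ) < 2 ^ (m + 1) := by positivity
    have hp2 : (0 : ℚ) < 2 ^ (m + 1 + d) := by positivity
    have ha : (k' : ℚ) < (2 * (k : ℚ) + 1) * 2 ^ d := by
      rw [div_lt_div_iff₀ hp2 hp1] at h3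
      rw [hpow] at h3
      nlinarith
    have hb : ((2 * (k : ℚ) + 1) * 2 ^ d) < (k' : ℚ) + 1 := by
      rw [div_lt_div_iff₀ hp1 hp2] at h4
      rw [hpow] at h4
      nlinarith
    have ha' : k' < (2 * k + 1) * 2 ^ d := by exact_mod_cast ha
    have hb' : (2 * k + 1) * 2 ^ d < k' + 1 := by exact_mod_cast hb
    omega

/-- The midpoint of any element of `S(I)` belongs to `E(I)`. -/
lemma mid_mem_EIn (I : SDPartition n) {A : ℚ × ℚ} (hA : A ∈ SIn I) :
    midQ A ∈ EIn I := by
  obtain ⟨⟨i, j, hij, rfl⟩, hsd⟩ := hA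
  have hijn : (i : ℕ) < (j : ℕ) := hij
  have hjn : (j : ℕ) ≤ n := Nat.le_of_lt_succ j.isLt
  by_cases hj : (j : ℕ) = (i : ℕ) + 1
  · left
    refine ⟨⟨i, by omega⟩, ?_⟩
    have h1 : I.pts i = I.pts (Fin.castSucc ⟨(i:ℕ), by omega⟩) :=
      congrArg I.pts (Fin.ext (by simp))
    have h2 : I.pts j = I.pts (Fin.succ ⟨(i:ℕ), by omega⟩) :=
      congrArg I.pts (Fin.ext (by simp <;> omega))
    rw [← h1, ← h2]
  · -- j ≥ i + 2
    have hj2 : (i : ℕ) + 2 ≤ (j : ℕ) := by omega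
    rw [show midQ (I.pts i, I.pts j) = (I.pts i + I.pts j) / 2 from rfl]
    obtain ⟨e, he⟩ : ∃ e : ℚ, e = (I.pts i + I.pts j) / 2 := ⟨_, rfl⟩
    rw [← he]
    have hiltj : I.pts i < I.pts j := I.mono hij
    have he1 : I.pts i < e := by rw [he]; linarith
    have he2 : e < I.pts j := by rw [he]; linarith
    have hPi : P I (i : ℕ) = I.pts i := by
      unfold P; congr 1; exact Fin.ext (by simp <;> omega)
    have hPj : P I (j : ℕ) = I.pts j := by
      unfold P; congr 1; exact Fin.ext (by simp <;> omega)
    set l : ℕ := Nat.findGreatest (fun t => P I t ≤ e) n with hl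
    have hln : l ≤ n := Nat.findGreatest_le n
    have hle : P I l ≤ e :=
      Nat.findGreatest_spec (P := fun t => P I t ≤ e) (m := (i : ℕ)) (n := n)
        (by omega) (by show P I (i : ℕ) ≤ e; rw [hPi]; exact he1.le)
    have hgt : ∀ t, l < t → t ≤ n → e < P I t := by
      intro t h1t h2t
      have := Nat.findGreatest_is_greatest (P := fun t => P I t ≤ e) h1t h2t
      exact lt_of_not_ge this
    have hil : (i : ℕ) ≤ l := by
      by_contra hc
      push_neg at hc
      have := hgt (i : ℕ) hc (by omega)
      rw [hPi] at this
      linarith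
    have hlj : l + 1 ≤ (j : ℕ) := by
      by_contra hc
      push_neg at hc
      have : (j : ℕ) ≤ l := by omega
      have := P_mono I this
      rw [hPj] at this
      linarith
    have hlnn : l < n := by omega
    have hlt2 : e < P I (l + 1) := hgt (l + 1) (by omega) (by omega)
    by_cases heq : P I l = e
    · right
      refine ⟨⟨⟨l, by omega⟩, ?_⟩, ?_, ?_⟩
      · refine Eq.trans ?_ heq
        unfold P; congr 1; exact Fin.ext (by simp <;> omega)
      · have h0 : I.pts 0 ≤ I.pts i := I.mono.monotone (Fin.zero_le i)
        rw [I.first] at h0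
        intro hc; rw [hc] at he1; linarith
      · have h1 : I.pts j ≤ I.pts (Fin.last n) := I.mono.monotone (Fin.le_last j)
        rw [I.last] at h1
        intro hc; rw [hc] at he2; linarith
    · exfalso
      have hlt1 : P I l < e := lt_of_le_of_ne hle heq
      -- the subinterval [P I l, P I (l+1)] is s.d.
      have hsdB : IsSD (P I l) (P I (l + 1)) := by
        have hB := I.sd ⟨l, hlnn⟩
        have e1 : P I l = I.pts (Fin.castSucc ⟨l, hlnn⟩) := by
          unfold P; congr 1; exact Fin.ext (by simp <;> omega)
        have e2 : P I (l + 1) = I.pts (Fin.succ ⟨l, hlnn⟩) := by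
          unfold P; congr 1; exact Fin.ext (by simp <;> omega)
        rw [e1, e2]; exact hB
      obtain ⟨m, k, hk, hA1, hA2⟩ := hsd
      obtain ⟨m', k', hk', hB1, hB2⟩ := hsdB
      simp only at hA1 hA2
      have hsub1 : (k : ℚ) / 2 ^ m ≤ (k' : ℚ) / 2 ^ m' := by
        rw [← hA1, ← hB1, ← hPi]
        exact P_mono I hil
      have hsub2 : ((k' : ℚ) + 1) / 2 ^ m' ≤ ((k : ℚ) + 1) / 2 ^ m := by
        rw [← hA2, ← hB2, ← hPj]
        exact P_mono I hlj
      have hmide : e = ((k : ℚ) / 2 ^ m + ((k : ℚ) + 1) / 2 ^ m) / 2 := by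
        rw [he, ← hA1, ← hA2]
      have h3 : (k' : ℚ) / 2 ^ m' < ((k : ℚ) / 2 ^ m + ((k : ℚ) + 1) / 2 ^ m) / 2 := by
        rw [← hmide, ← hB1]; exact hlt1
      have h4 : ((k : ℚ) / 2 ^ m + ((k : ℚ) + 1) / 2 ^ m) / 2 < ((k' : ℚ) + 1) / 2 ^ m' := by
        rw [← hmide, ← hB2]; exact hlt2
      obtain ⟨heq1, heq2⟩ := dyadic_core hk hk' hsub1 hsub2 h3 h4
      -- then B = A, so l = i and l+1 = j, contradicting j ≥ i+2
      have hBL : P I l = I.pts i := by rw [hB1, heq1, ← hA1]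
      have hBR : P I (l + 1) = I.pts j := by rw [hB2, heq2, ← hA2]
      rw [← hPi] at hBL
      rw [← hPj] at hBR
      have hli : l = (i : ℕ) := by
        by_contra hc
        rcases Nat.lt_or_ge l (i : ℕ) with h | h
        · exact absurd hBL (ne_of_lt (P_lt I h (by omega)))
        · exact absurd hBL (ne_of_gt (P_lt I (by omega) (by omega)))
      have hlj' : l + 1 = (j : ℕ) := by
        by_contra hc
        rcases Nat.lt_or_ge (l + 1) (j : ℕ) with h | h
        · exact absurd hBR (ne_of_lt (P_lt I h (by omega)))
        · exact absurd hBR (ne_of_gt (P_lt I (by omega) (by omega)))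
      omega

end Statement15Aux

open Statement15Aux

/-- if `γ^I_J` preserves signs on `E` and `S(I)`, `S(J)` are
listed in increasing midpoint order as `a` and `b`, then `s (a i) = s (b i)`
for every `i`; consequently the half grid diagrams `H_I` and `H_J` are
compatible: intervals occupying the same column carry the same symbol. -/
theorem statement_15 {n : ℕ} (I J : SDPartition n) (s : ℚ × ℚ → ℤ)
    (hs : SignSpec s) (γ : ℚ → ℚ) (hγ : IsGamma I J γ)
    (hpres : PreservesSigns s γ)
    (a b : Fin (2 * n - 1) → ℚ × ℚ)
    (ha : StrictMono fun i => midQ (a i)) (har : Set.range a = SIn I)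
    (hb : StrictMono fun i => midQ (b i)) (hbr : Set.range b = SIn J) :
    (∀ i, s (a i) = s (b i)) ∧
    ∀ A ∈ SIn I, ∀ B ∈ SIn J, px I A = px J B → s A = s B := by
  classical
  have hn : 1 ≤ n := by
    by_contra hc
    push_neg at hc
    interval_cases n
    have h0 := I.first
    have h1 := I.last
    rw [show (Fin.last 0) = 0 from rfl] at h1
    rw [h0] at h1
    norm_num at h1
  set K : Set ℕ := {k : ℕ | 1 ≤ k ∧ k < 2 * n} with hK
  have hKfin : K.Finite := by
    have : K = ↑(Finset.Ico 1 (2 * n)) := by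
      ext k; simp [hK]
    rw [this]; exact Finset.finite_toSet _
  have hKcard : K.ncard = 2 * n - 1 := by
    have : K = ↑(Finset.Ico 1 (2 * n)) := by
      ext k; simp [hK]
    rw [this, Set.ncard_coe_finset, Nat.card_Ico]
  have hEI : EIn I = pI I '' K := EIn_eq I
  have hEJ : EIn J = pI J '' K := EIn_eq J
  have hEIfin : (EIn I).Finite := by rw [hEI]; exact hKfin.image _
  have hEJfin : (EIn J).Finite := by rw [hEJ]; exact hKfin.image _
  have hEIcard : (EIn I).ncard ≤ 2 * n - 1 := by
    rw [hEI, ← hKcard]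
    exact Set.ncard_image_le hKfin
  have hEJcard : (EIn J).ncard ≤ 2 * n - 1 := by
    rw [hEJ, ← hKcard]
    exact Set.ncard_image_le hKfin
  -- ranges of the midpoint enumerations
  have hainj : Function.Injective a := by
    intro x y hxy
    exact ha.injective (by rw [hxy])
  have hbinj : Function.Injective b := by
    intro x y hxy
    exact hb.injective (by rw [hxy])
  have hamem : ∀ i, a i ∈ SIn I := by
    intro i; rw [← har]; exact Set.mem_range_self i
  have hbmem : ∀ i, b i ∈ SIn J := by
    intro i; rw [← hbr]; exact Set.mem_range_self i
  have hrangeA : Set.range (fun i => midQ (a i)) = EIn I := by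
    apply Set.eq_of_subset_of_ncard_le
    · rintro q ⟨i, rfl⟩
      exact mid_mem_EIn I (hamem i)
    · calc (EIn I).ncard ≤ 2 * n - 1 := hEIcard
        _ = (Set.range (fun i => midQ (a i))).ncard := by
            rw [← Set.image_univ, Set.ncard_image_of_injective _ ha.injective,
              Set.ncard_univ]
            simp
    · exact hEIfin
  have hrangeB : Set.range (fun i => midQ (b i)) = EIn J := by
    apply Set.eq_of_subset_of_ncard_le
    · rintro q ⟨i, rfl⟩
      exact mid_mem_EIn J (hbmem i)
    · calc (EIn J).ncard ≤ 2 * n - 1 := hEJcard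
        _ = (Set.range (fun i => midQ (b i))).ncard := by
            rw [← Set.image_univ, Set.ncard_image_of_injective _ hb.injective,
              Set.ncard_univ]
            simp
    · exact hEJfin
  -- the composed map
  set g : Fin (2 * n - 1) → ℚ := fun i => γ (midQ (a i)) with hg
  have hrep : ∀ i, ∃ k ∈ K, midQ (a i) = pI I k ∧ g i = pI J k := by
    intro i
    have : midQ (a i) ∈ pI I '' K := by
      rw [← hEI, ← hrangeA]; exact Set.mem_range_self i
    obtain ⟨k, hkK, hkeq⟩ := this
    refine ⟨k, hkK, hkeq.symm, ?_⟩
    rw [hg]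
    simp only
    rw [← hkeq]
    exact gamma_pI hγ (by rcases hkK with ⟨_, h⟩; omega) hn
  have hgmono : StrictMono g := by
    intro i j hij
    obtain ⟨k, hkK, hk1, hk2⟩ := hrep i
    obtain ⟨k', hkK', hk1', hk2'⟩ := hrep j
    have hmlt : midQ (a i) < midQ (a j) := ha hij
    rw [hk1, hk1'] at hmlt
    have hkk : k < k' := by
      rw [pI_lt_iff I (by rcases hkK with ⟨_, h⟩; omega)
        (by rcases hkK' with ⟨_, h⟩; omega)] at hmlt
      exact hmlt
    rw [hk2, hk2']
    exact pI_strict J hkk (by rcases hkK' with ⟨_, h⟩; omega)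
  have hgrange : Set.range g = EIn J := by
    apply Set.eq_of_subset_of_ncard_le
    · rintro q ⟨i, rfl⟩
      obtain ⟨k, hkK, _, hk2⟩ := hrep i
      rw [hk2, hEJ]
      exact Set.mem_image_of_mem _ hkK
    · calc (EIn J).ncard ≤ 2 * n - 1 := hEJcard
        _ = (Set.range g).ncard := by
            rw [← Set.image_univ, Set.ncard_image_of_injective _ hgmono.injective,
              Set.ncard_univ]
            simp
    · exact hEJfin
  have huniq : g = fun i => midQ (b i) := by
    haveI : WellFoundedLT (Fin (2 * n - 1)) := inferInstance
    exact (StrictMono.range_inj hgmono hb).mp (hgrange.trans hrangeB.symm)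
  have hgammamid : ∀ i, γ (midQ (a i)) = midQ (b i) := by
    intro i; exact congrFun huniq i
  have part1 : ∀ i, s (a i) = s (b i) := by
    intro i
    have haSD : a i ∈ SDSet := (hamem i).2
    have hbSD : b i ∈ SDSet := (hbmem i).2
    exact (hpres.2 (a i) (b i) haSD hbSD (hgammamid i)).symm
  refine ⟨part1, ?_⟩
  intro A hA B hB hpx
  obtain ⟨i, rfl⟩ : ∃ i, a i = A := by rw [← Set.mem_range, har]; exact hA
  obtain ⟨j, rfl⟩ : ∃ j, b j = B := by rw [← Set.mem_range, hbr]; exact hB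
  have hpxa : px I (a i) = (i : ℕ) + 2 := by
    unfold px
    congr 1
    have hset : {B ∈ SIn I | midQ B < midQ (a i)} = a '' Set.Iio i := by
      ext C
      constructor
      · rintro ⟨hC, hClt⟩
        obtain ⟨k, rfl⟩ : ∃ k, a k = C := by rw [← Set.mem_range, har]; exact hC
        exact ⟨k, ha.lt_iff_lt.mp hClt, rfl⟩
      · rintro ⟨k, hk, rfl⟩
        exact ⟨hamem k, ha hk⟩
    rw [hset, Set.ncard_image_of_injective _ hainj]
    rw [show (Set.Iio i) = ↑(Finset.Iio i) from (Finset.coe_Iio i).symm]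
    rw [Set.ncard_coe_finset, Fin.card_Iio]
  have hpxb : px J (b j) = (j : ℕ) + 2 := by
    unfold px
    congr 1
    have hset : {C ∈ SIn J | midQ C < midQ (b j)} = b '' Set.Iio j := by
      ext C
      constructor
      · rintro ⟨hC, hClt⟩
        obtain ⟨k, rfl⟩ : ∃ k, b k = C := by rw [← Set.mem_range, hbr]; exact hC
        exact ⟨k, hb.lt_iff_lt.mp hClt, rfl⟩
      · rintro ⟨k, hk, rfl⟩
        exact ⟨hbmem k, hb hk⟩
    rw [hset, Set.ncard_image_of_injective _ hbinj]
    rw [show (Set.Iio j) = ↑(Finset.Iio j) from (Finset.coe_Iio j).symm]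
    rw [Set.ncard_coe_finset, Fin.card_Iio]
  have hij : i = j := by
    rw [hpxa, hpxb] at hpx
    exact Fin.ext (by omega)
  rw [hij]
  exact part1 j
end

section
/- Let (I, J) be a pair of standard dyadic n-partitions and let g = γ^I_J. Then g preserves signs on E if and only if for every i ∈ {1,...,2n−1}, the i-th smallest element of E(I) and the i-th smallest element of E(J) have the same sign. (This is the content of the identification of the oriented Thompson group with the sign-preserving elements of F.) -/
/-- sign of a dyadic index: (-1)^(number of ones in binary). -/
def dsgn (k : ℕ) : ℤ := (-1) ^ ((Nat.digits 2 k).sum)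

lemma dsgn_zero : dsgn 0 = 1 := by simp [dsgn]

lemma dsgn_step (k : ℕ) : dsgn k = (-1) ^ (k % 2) * dsgn (k / 2) := by
  rcases Nat.eq_zero_or_pos k with h | h
  · subst h; simp [dsgn]
  · unfold dsgn
    rw [Nat.digits_def' (by norm_num) h]
    simp [pow_add]

lemma dsgn_cases (k : ℕ) : dsgn k = 1 ∨ dsgn k = -1 := by
  unfold dsgn; rcases Nat.even_or_odd ((Nat.digits 2 k).sum) with h | h
  · left; exact h.neg_one_pow
  · right; exact h.neg_one_pow

lemma dsgn_mul_self (k : ℕ) : dsgn k * dsgn k = 1 := by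
  rcases dsgn_cases k with h | h <;> rw [h] <;> norm_num

lemma dsgn_split (d : ℕ) : ∀ p j : ℕ, j < 2 ^ d → dsgn (p * 2 ^ d + j) = dsgn p * dsgn j := by
  induction d with
  | zero => intro p j hj; interval_cases j; simp [dsgn_zero]
  | succ d ih =>
    intro p j hj
    set k := p * 2 ^ (d + 1) + j with hk
    have h2 : p * 2 ^ (d + 1) = 2 * (p * 2 ^ d) := by ring
    have hkm : k % 2 = j % 2 := by omega
    have hkd : k / 2 = p * 2 ^ d + j / 2 := by omega
    rw [dsgn_step k, hkm, hkd, ih p (j / 2) (by omega), dsgn_step j]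
    ring
def SDp (m k : ℕ) : ℚ × ℚ := ((k : ℚ) / 2 ^ m, ((k : ℚ) + 1) / 2 ^ m)

lemma two_pow_posQ (m : ℕ) : (0:ℚ) < 2 ^ m := by positivity

lemma pow_eq_powQ {m m' : ℕ} (h : (2:ℚ) ^ m = 2 ^ m') : m = m' := by
  have h2 : ((2 ^ m : ℕ) : ℚ) = ((2 ^ m' : ℕ) : ℚ) := by push_cast; exact h
  exact Nat.pow_right_injective le_rfl (Nat.cast_injective h2)

lemma rep_inj {m m' k k' : ℕ} (h1 : (k:ℚ)/2^m = (k':ℚ)/2^m')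
    (h2 : ((k:ℚ)+1)/2^m = ((k':ℚ)+1)/2^m') : m = m' ∧ k = k' := by
  have hp := two_pow_posQ m; have hp' := two_pow_posQ m'
  rw [div_eq_div_iff hp.ne' hp'.ne'] at h1 h2
  have h2' : (k:ℚ) * 2^m' + 2^m' = (k':ℚ) * 2^m + 2^m := by
    have := h2; rw [add_mul, add_mul, one_mul, one_mul] at this; linarith
  have hm : (2:ℚ)^m = 2^m' := by linarith
  obtain rfl := pow_eq_powQ hm
  have hk : (k:ℚ) = k' := by
    have := mul_right_cancel₀ hp.ne' h1; exact this
  exact ⟨rfl, Nat.cast_injective hk⟩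

lemma odd_mul_pow_inj {a b : ℕ} (ha : a % 2 = 1) (hb : b % 2 = 1) :
    ∀ {x y : ℕ}, a * 2 ^ x = b * 2 ^ y → x = y ∧ a = b := by
  intro x
  induction x with
  | zero =>
    intro y h
    cases y with
    | zero => simpa using h
    | succ y => exfalso; rw [pow_succ, ← mul_assoc] at h; simp at h; omega
  | succ x ih =>
    intro y h
    cases y with
    | zero => exfalso; rw [pow_succ, ← mul_assoc] at h; simp at h; omega
    | succ y =>
      rw [pow_succ, pow_succ, ← mul_assoc, ← mul_assoc] at h
      have := ih (y := y) (Nat.eq_of_mul_eq_mul_right (by norm_num) h)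
      omega

lemma midQ_SDp (m k : ℕ) : midQ (SDp m k) = (2*(k:ℚ)+1)/2^(m+1) := by
  have := two_pow_posQ m
  simp only [midQ, SDp]
  field_simp
  ring

lemma SDp_mem (m k : ℕ) (hk : k < 2 ^ m) : SDp m k ∈ SDSet := ⟨m, k, hk, rfl, rfl⟩

lemma isSD_rep {A : ℚ × ℚ} (hA : A ∈ SDSet) : ∃ m k : ℕ, k < 2 ^ m ∧ A = SDp m k := by
  obtain ⟨m, k, hk, h1, h2⟩ := hA
  exact ⟨m, k, hk, Prod.ext h1 h2⟩

lemma mid_inj {A B : ℚ × ℚ} (hA : A ∈ SDSet) (hB : B ∈ SDSet) (h : midQ A = midQ B) :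
    A = B := by
  obtain ⟨m, k, hk, rfl⟩ := isSD_rep hA
  obtain ⟨m', k', hk', rfl⟩ := isSD_rep hB
  rw [midQ_SDp, midQ_SDp] at h
  rw [div_eq_div_iff (two_pow_posQ _).ne' (two_pow_posQ _).ne'] at h
  have hN : (2*k+1) * 2 ^ (m'+1) = (2*k'+1) * 2 ^ (m+1) := by exact_mod_cast h
  obtain ⟨hmm, hkk⟩ := odd_mul_pow_inj (by omega) (by omega) hN
  obtain rfl : m = m' := by omega
  obtain rfl : k = k' := by omega
  rfl

lemma left_iff {m k : ℕ} (hk : k < 2 ^ m) :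
    IsLeftSD ((k:ℚ)/2^m) (((k:ℚ)+1)/2^m) ↔ 1 ≤ m ∧ k % 2 = 0 := by
  constructor
  · rintro ⟨m', k', hm', hk', hev, h1, h2⟩
    obtain ⟨rfl, rfl⟩ := rep_inj h1 h2
    exact ⟨hm', Nat.even_iff.mp hev⟩
  · rintro ⟨hm, he⟩
    exact ⟨m, k, hm, hk, Nat.even_iff.mpr he, rfl, rfl⟩

lemma right_intro {m k : ℕ} (hk : k < 2 ^ m) (ho : k % 2 = 1) :
    IsRightSD ((k:ℚ)/2^m) (((k:ℚ)+1)/2^m) := by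
  have hm : 1 ≤ m := by
    rcases Nat.eq_zero_or_pos m with rfl | h
    · simp at hk; omega
    · exact h
  exact Or.inr ⟨m, k, hm, hk, Nat.odd_iff.mpr ho, rfl, rfl⟩

lemma conj_of_left {A : ℚ × ℚ} (h : IsLeftSD A.1 A.2) :
    conjSD A = (A.2, 2 * A.2 - A.1) := by unfold conjSD; exact if_pos h

lemma conj_of_not_left {A : ℚ × ℚ} (h : ¬ IsLeftSD A.1 A.2) :
    conjSD A = (2 * A.1 - A.2, A.1) := by unfold conjSD; exact if_neg h

lemma join_conj (m k : ℕ) (hk : k < 2 ^ (m+1)) :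
    sdJoin (SDp (m+1) k) (conjSD (SDp (m+1) k)) = SDp m (k / 2) := by
  have hp := two_pow_posQ (m+1)
  have hp' := two_pow_posQ m
  have hlr : (k:ℚ)/2^(m+1) ≤ ((k:ℚ)+1)/2^(m+1) := by
    rw [div_le_div_iff_of_pos_right hp]; linarith
  have hps : (2:ℚ)^(m+1) = 2^m * 2 := by ring
  rcases Nat.even_or_odd k with he | ho
  · have hc : (k:ℚ) = 2 * (k/2 : ℕ) := by
      have he' := Nat.even_iff.mp he
      have : k = 2 * (k/2) := by omega
      exact_mod_cast this
    have hL : IsLeftSD (SDp (m+1) k).1 (SDp (m+1) k).2 :=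
      (left_iff hk).mpr ⟨by omega, Nat.even_iff.mp he⟩
    rw [conj_of_left hL]
    simp only [sdJoin, SDp]
    rw [min_eq_left hlr, max_eq_right (by linarith : ((k:ℚ)+1)/2^(m+1) ≤ 2*(((k:ℚ)+1)/2^(m+1)) - (k:ℚ)/2^(m+1))]
    rw [Prod.mk.injEq]
    constructor
    · rw [hc, hps]; field_simp
    · rw [hc, hps]; field_simp; ring
  · have hc : (k:ℚ) = 2 * (k/2 : ℕ) + 1 := by
      have : k = 2 * (k/2) + 1 := by
        have := Nat.odd_iff.mp ho; omega
      exact_mod_cast this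
    have hnL : ¬ IsLeftSD (SDp (m+1) k).1 (SDp (m+1) k).2 := by
      intro h
      have h2 := ((left_iff hk).mp h).2
      have := Nat.odd_iff.mp ho
      omega
    rw [conj_of_not_left hnL]
    simp only [sdJoin, SDp]
    rw [min_eq_right (by linarith : 2*((k:ℚ)/2^(m+1)) - ((k:ℚ)+1)/2^(m+1) ≤ (k:ℚ)/2^(m+1)), max_eq_left hlr]
    rw [Prod.mk.injEq]
    constructor
    · rw [hc, hps]; field_simp; ring
    · rw [hc, hps]; field_simp; ring
lemma s_SDp {s : ℚ × ℚ → ℤ} (hs : SignSpec s) :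
    ∀ m k, k < 2 ^ m → s (SDp m k) = dsgn k := by
  intro m
  induction m with
  | zero =>
    intro k hk
    have hk0 : k = 0 := by simpa using hk
    subst hk0
    have h01 : SDp 0 0 = ((0:ℚ), (1:ℚ)) := by simp [SDp]
    rw [h01, hs.2.1, dsgn_zero]
  | succ m ih =>
    intro k hk
    have hSD : SDp (m+1) k ∈ SDSet := SDp_mem _ _ hk
    have hne : SDp (m+1) k ≠ ((0:ℚ), (1:ℚ)) := by
      intro h
      have h1 : (k:ℚ)/2^(m+1) = 0 := congrArg Prod.fst h
      have h2 : ((k:ℚ)+1)/2^(m+1) = 1 := congrArg Prod.snd h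
      have hp := two_pow_posQ (m+1)
      rw [div_eq_zero_iff] at h1
      rw [div_eq_one_iff_eq hp.ne'] at h2
      have hk0 : (k:ℚ) = 0 := by
        rcases h1 with h1 | h1
        · exact h1
        · exact absurd h1 hp.ne'
      have h2' : (1:ℚ) = 2^(m+1) := by rw [hk0] at h2; linarith
      have : (1:ℚ) < 2^(m+1) := one_lt_pow₀ (by norm_num) (by omega)
      linarith
    obtain ⟨hLs, hRs⟩ := hs.2.2 _ hSD hne
    have hj := join_conj m k hk
    have hps : (2:ℕ)^(m+1) = 2^m * 2 := by ring
    have hhalf : k / 2 < 2 ^ m := by omega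
    rcases Nat.even_or_odd k with he | ho
    · have he' := Nat.even_iff.mp he
      have hL : IsLeftSD (SDp (m+1) k).1 (SDp (m+1) k).2 :=
        (left_iff hk).mpr ⟨by omega, he'⟩
      rw [hLs hL, hj, ih _ hhalf, dsgn_step k, he']
      simp
    · have ho' := Nat.odd_iff.mp ho
      have hR : IsRightSD (SDp (m+1) k).1 (SDp (m+1) k).2 := right_intro hk ho'
      rw [hRs hR, hj, ih _ hhalf, dsgn_step k, ho']
      ring
section Partition
variable {n : ℕ} (I : SDPartition n)

lemma pts_nonneg (t : Fin (n+1)) : 0 ≤ I.pts t := by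
  have := I.mono.monotone (Fin.zero_le t)
  rw [I.first] at this; exact this

lemma pts_le_one (t : Fin (n+1)) : I.pts t ≤ 1 := by
  have := I.mono.monotone (Fin.le_last t)
  rw [I.last] at this; exact this

lemma exists_subinterval (x : ℚ) (h0 : 0 ≤ x) (h1 : x < 1) :
    ∃ i : Fin n, I.pts i.castSucc ≤ x ∧ x < I.pts i.succ := by
  classical
  set T : Finset (Fin (n+1)) := Finset.univ.filter (fun t => I.pts t ≤ x) with hT
  have hne : T.Nonempty := ⟨0, by simp [hT, I.first, h0]⟩
  set t₀ := T.max' hne with ht₀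
  have hmem : t₀ ∈ T := T.max'_mem hne
  have hle : I.pts t₀ ≤ x := by simpa [hT] using hmem
  have htlt : t₀.val < n := by
    by_contra h
    have : t₀ = Fin.last n := by
      apply Fin.ext; have := t₀.isLt; simp; omega
    rw [this, I.last] at hle; linarith
  refine ⟨⟨t₀.val, htlt⟩, ?_, ?_⟩
  · have : (⟨t₀.val, htlt⟩ : Fin n).castSucc = t₀ := by apply Fin.ext; simp
    rw [this]; exact hle
  · by_contra h
    push_neg at h
    have hmem' : (⟨t₀.val, htlt⟩ : Fin n).succ ∈ T := by
      simp only [hT, Finset.mem_filter, Finset.mem_univ, true_and]; exact h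
    have := T.le_max' _ hmem'
    rw [← ht₀] at this
    have : ((⟨t₀.val, htlt⟩ : Fin n).succ : Fin (n+1)).val ≤ t₀.val := this
    simp at this

noncomputable def SDPartition.lev (i : Fin n) : ℕ := (I.sd i).choose

noncomputable def SDPartition.idx (i : Fin n) : ℕ := (I.sd i).choose_spec.choose

lemma SDPartition.idx_lt (i : Fin n) : I.idx i < 2 ^ I.lev i :=
  (I.sd i).choose_spec.choose_spec.1

lemma SDPartition.pts_castSucc_eq (i : Fin n) : I.pts i.castSucc = (I.idx i : ℚ) / 2 ^ I.lev i :=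
  (I.sd i).choose_spec.choose_spec.2.1

lemma SDPartition.pts_succ_eq (i : Fin n) : I.pts i.succ = ((I.idx i : ℚ) + 1) / 2 ^ I.lev i :=
  (I.sd i).choose_spec.choose_spec.2.2

lemma SDPartition.sub_eq_SDp (i : Fin n) : (I.pts i.castSucc, I.pts i.succ) = SDp (I.lev i) (I.idx i) :=
  Prod.ext (I.pts_castSucc_eq i) (I.pts_succ_eq i)

end Partition
section Gamma
variable {n : ℕ} {I J : SDPartition n} {γ : ℚ → ℚ}

lemma sub_lt (I : SDPartition n) (i : Fin n) : I.pts i.castSucc < I.pts i.succ :=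
  I.mono (Fin.castSucc_lt_succ (i := i))

lemma gamma_pts_left (hγ : IsGamma I J γ) (i : Fin n) :
    γ (I.pts i.castSucc) = J.pts i.castSucc := by
  have h := hγ i _ le_rfl (le_of_lt (sub_lt I i))
  simpa using h

lemma gamma_pts_right (hγ : IsGamma I J γ) (i : Fin n) :
    γ (I.pts i.succ) = J.pts i.succ := by
  have hne : I.pts i.succ - I.pts i.castSucc ≠ 0 := sub_ne_zero.mpr (ne_of_gt (sub_lt I i))
  have h := hγ i _ (le_of_lt (sub_lt I i)) le_rfl
  rw [h, div_mul_cancel₀ _ hne]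
  ring

lemma gamma_mid (hγ : IsGamma I J γ) (i : Fin n) :
    γ (midQ (I.pts i.castSucc, I.pts i.succ)) = midQ (J.pts i.castSucc, J.pts i.succ) := by
  have hlt := sub_lt I i
  have hne : I.pts i.succ - I.pts i.castSucc ≠ 0 := sub_ne_zero.mpr (ne_of_gt hlt)
  have h := hγ i (midQ (I.pts i.castSucc, I.pts i.succ))
    (by unfold midQ; simp only; linarith) (by unfold midQ; simp only; linarith)
  rw [h]
  unfold midQ
  simp only
  field_simp
  ring

end Gamma

def Dy (q : ℚ) : Prop := ∃ (z : ℤ) (m : ℕ), q = (z : ℚ) / 2 ^ m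

lemma dy_add {a b : ℚ} (ha : Dy a) (hb : Dy b) : Dy (a + b) := by
  obtain ⟨z, m, rfl⟩ := ha; obtain ⟨w, l, rfl⟩ := hb
  refine ⟨z * 2 ^ l + w * 2 ^ m, m + l, ?_⟩
  have hm := two_pow_posQ m; have hl := two_pow_posQ l
  push_cast
  rw [div_add_div _ _ hm.ne' hl.ne', pow_add]
  ring

lemma dy_sub {a b : ℚ} (ha : Dy a) (hb : Dy b) : Dy (a - b) := by
  obtain ⟨z, m, rfl⟩ := ha; obtain ⟨w, l, rfl⟩ := hb
  refine ⟨z * 2 ^ l - w * 2 ^ m, m + l, ?_⟩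
  have hm := two_pow_posQ m; have hl := two_pow_posQ l
  push_cast
  rw [sub_eq_add_neg, ← neg_div, div_add_div _ _ hm.ne' hl.ne', pow_add]
  ring

lemma dy_mul {a b : ℚ} (ha : Dy a) (hb : Dy b) : Dy (a * b) := by
  obtain ⟨z, m, rfl⟩ := ha; obtain ⟨w, l, rfl⟩ := hb
  refine ⟨z * w, m + l, ?_⟩
  push_cast
  rw [div_mul_div_comm, pow_add]

lemma dy_pow_div_pow (u v : ℕ) : Dy ((2:ℚ) ^ u / 2 ^ v) := ⟨2 ^ u, v, by push_cast; ring⟩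

lemma dy_natcast_div (k m : ℕ) : Dy ((k : ℚ) / 2 ^ m) := ⟨k, m, by push_cast; ring⟩

lemma dy_pts {n : ℕ} (I : SDPartition n) (t : Fin (n + 1)) : Dy (I.pts t) := by
  rcases Fin.eq_castSucc_or_eq_last t with ⟨i, rfl⟩ | rfl
  · rw [I.pts_castSucc_eq i]; exact dy_natcast_div _ _
  · rw [I.last]; exact ⟨1, 0, by norm_num⟩

lemma Edyadic_iff {q : ℚ} : q ∈ Edyadic ↔ Dy q ∧ 0 < q ∧ q < 1 := by
  constructor
  · rintro ⟨m, k, hk1, hk2, rfl⟩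
    have hp := two_pow_posQ m
    refine ⟨dy_natcast_div k m, div_pos (by exact_mod_cast hk1) hp, ?_⟩
    rw [div_lt_one hp]
    exact_mod_cast hk2
  · rintro ⟨⟨z, m, rfl⟩, h0, h1⟩
    have hp := two_pow_posQ m
    have hz0 : 0 < z := by
      rw [div_pos_iff] at h0
      rcases h0 with ⟨hz, _⟩ | ⟨_, hc⟩
      · exact_mod_cast hz
      · linarith
    have hzm : z < ((2 ^ m : ℕ) : ℤ) := by
      rw [div_lt_one hp] at h1
      exact_mod_cast h1
    refine ⟨m, z.toNat, by omega, by omega, ?_⟩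
    rw [show ((z.toNat : ℕ) : ℚ) = (z : ℚ) by exact_mod_cast Int.toNat_of_nonneg hz0.le]
section Enum
variable {n : ℕ}

def fEnum (I : SDPartition (n+1)) (j : Fin (2*n+1)) : ℚ :=
  if j.val % 2 = 0 then
    midQ (I.pts (⟨j.val/2, by have := j.isLt; omega⟩ : Fin (n+1)).castSucc,
          I.pts (⟨j.val/2, by have := j.isLt; omega⟩ : Fin (n+1)).succ)
  else I.pts ⟨(j.val+1)/2, by have := j.isLt; omega⟩

lemma fEnum_even (I : SDPartition (n+1)) (j : Fin (2*n+1)) (h : j.val % 2 = 0)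
    (a : Fin (n+1)) (ha : a.val = j.val / 2) :
    fEnum I j = midQ (I.pts a.castSucc, I.pts a.succ) := by
  unfold fEnum
  rw [if_pos h]
  have : (⟨j.val/2, by have := j.isLt; omega⟩ : Fin (n+1)) = a := Fin.ext ha.symm
  rw [this]

lemma fEnum_odd (I : SDPartition (n+1)) (j : Fin (2*n+1)) (h : j.val % 2 = 1)
    (t : Fin (n+2)) (ht : t.val = (j.val+1)/2) :
    fEnum I j = I.pts t := by
  unfold fEnum
  rw [if_neg (by omega)]
  have : (⟨(j.val+1)/2, by have := j.isLt; omega⟩ : Fin (n+2)) = t := Fin.ext ht.symm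
  rw [this]

lemma fEnum_strictMono (I : SDPartition (n+1)) : StrictMono (fEnum I) := by
  rw [Fin.strictMono_iff_lt_succ]
  intro i
  have hlt : i.val < 2*n := i.isLt
  rcases Nat.even_or_odd i.val with he | ho
  · have he' := Nat.even_iff.mp he
    have ha : i.val / 2 < n + 1 := by omega
    rw [fEnum_even I i.castSucc (by simp [he']) ⟨i.val/2, ha⟩ (by simp),
        fEnum_odd I i.succ (by simp; omega) (⟨i.val/2, ha⟩ : Fin (n+1)).succ (by simp; omega)]
    have := sub_lt I ⟨i.val/2, ha⟩
    unfold midQ; simp only; linarith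
  · have ho' := Nat.odd_iff.mp ho
    have ha : i.val / 2 + 1 < n + 1 := by omega
    rw [fEnum_odd I i.castSucc (by simp [ho']) (⟨i.val/2 + 1, ha⟩ : Fin (n+1)).castSucc
          (by simp; omega),
        fEnum_even I i.succ (by simp; omega) ⟨i.val/2 + 1, ha⟩ (by simp; omega)]
    have := sub_lt I ⟨i.val/2 + 1, ha⟩
    unfold midQ; simp only; linarith

lemma fEnum_range (I : SDPartition (n+1)) : Set.range (fEnum I) = EIn I := by
  ext q
  constructor
  · rintro ⟨j, rfl⟩
    rcases Nat.even_or_odd j.val with he | ho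
    · exact Or.inl ⟨⟨j.val/2, by have := j.isLt; omega⟩,
        fEnum_even I j (Nat.even_iff.mp he) _ rfl⟩
    · have ho' := Nat.odd_iff.mp ho
      have hj := j.isLt
      have htlt : (j.val+1)/2 < n + 2 := by omega
      have ht : fEnum I j = I.pts ⟨(j.val+1)/2, htlt⟩ := fEnum_odd I j ho' _ rfl
      refine Or.inr ⟨⟨_, ht.symm⟩, ?_, ?_⟩
      · rw [ht]
        have h0 : (0 : Fin (n+2)) < ⟨(j.val+1)/2, htlt⟩ := by
          rw [Fin.lt_def]; simp; omega
        have := I.mono h0; rw [I.first] at this; exact (ne_of_gt this)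
      · rw [ht]
        have hlast : (⟨(j.val+1)/2, htlt⟩ : Fin (n+2)) < Fin.last (n+1) := by
          rw [Fin.lt_def]; simp; omega
        have := I.mono hlast; rw [I.last] at this; exact ne_of_lt this
  · rintro (⟨i, hi⟩ | ⟨⟨t, ht⟩, h0, h1⟩)
    · refine ⟨⟨2*i.val, by have := i.isLt; omega⟩, ?_⟩
      rw [fEnum_even I _ (by simp) i (by simp)]
      exact hi.symm
    · have ht1 : 1 ≤ t.val := by
        by_contra h
        push_neg at h
        have : t = 0 := Fin.ext (by rw [Fin.val_zero]; omega)
        rw [this, I.first] at ht; exact h0 ht.symm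
      have ht2 : t.val ≤ n := by
        have hl := t.isLt
        have : t.val ≠ n + 1 := by
          intro h
          have : t = Fin.last (n+1) := Fin.ext (by simp [h])
          rw [this, I.last] at ht; exact h1 ht.symm
        omega
      refine ⟨⟨2*t.val - 1, by omega⟩, ?_⟩
      rw [fEnum_odd I _ (by simp; omega) t (by simp; omega)]
      exact ht

lemma gamma_fEnum {I J : SDPartition (n+1)} {γ : ℚ → ℚ} (hγ : IsGamma I J γ)
    (j : Fin (2*n+1)) : γ (fEnum I j) = fEnum J j := by
  rcases Nat.even_or_odd j.val with he | ho
  · have he' := Nat.even_iff.mp he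
    have ha : j.val / 2 < n + 1 := by have := j.isLt; omega
    rw [fEnum_even I j he' ⟨j.val/2, ha⟩ rfl, fEnum_even J j he' ⟨j.val/2, ha⟩ rfl]
    exact gamma_mid hγ _
  · have ho' := Nat.odd_iff.mp ho
    have hj := j.isLt
    have ha : (j.val+1)/2 < n + 1 := by omega
    have hc : ((⟨(j.val+1)/2, ha⟩ : Fin (n+1)).castSucc : Fin (n+2)).val = (j.val+1)/2 := by
      simp
    rw [fEnum_odd I j ho' _ hc, fEnum_odd J j ho' _ hc]
    exact gamma_pts_left hγ _

end Enum

set_option linter.deprecated false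

/-- `g = γ^I_J` preserves signs on `E` if and only if for every
`i`, the `i`-th smallest element of `E(I)` and the `i`-th smallest element of
`E(J)` have the same sign (the sign of a point of `E` being the sign of the
unique standard dyadic interval having it as midpoint). -/
theorem statement_16 {n : ℕ} (I J : SDPartition n) (s : ℚ × ℚ → ℤ)
    (hs : SignSpec s) (γ : ℚ → ℚ) (hγ : IsGamma I J γ)
    (eI eJ : Fin (2 * n - 1) → ℚ)
    (heI : StrictMono eI) (heIr : Set.range eI = EIn I)
    (heJ : StrictMono eJ) (heJr : Set.range eJ = EIn J) :
    PreservesSigns s γ ↔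
      ∀ i, ∀ A B : ℚ × ℚ, A ∈ SDSet → B ∈ SDSet →
        midQ A = eI i → midQ B = eJ i → s A = s B := by
  rcases n with _ | n
  · exfalso
    have h0 := I.first
    have h1 := I.last
    have hl : (Fin.last 0) = (0 : Fin (0+1)) := rfl
    rw [hl, h0] at h1
    norm_num at h1
  have heIf : eI = fEnum I :=
    (StrictMono.range_inj heI (fEnum_strictMono I)).mp (heIr.trans (fEnum_range I).symm)
  have heJf : eJ = fEnum J :=
    (StrictMono.range_inj heJ (fEnum_strictMono J)).mp (heJr.trans (fEnum_range J).symm)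
  constructor
  · rintro ⟨hP1, hP2⟩ i A B hA hB hmA hmB
    have hg : γ (midQ A) = midQ B := by
      rw [hmA, hmB, heIf, heJf]
      exact gamma_fEnum hγ i
    exact (hP2 A B hA hB hg).symm
  · intro H
    constructor
    · -- γ '' Edyadic = Edyadic
      apply Set.eq_of_subset_of_subset
      · rintro y ⟨x, hx, rfl⟩
        rw [Edyadic_iff] at hx ⊢
        obtain ⟨hdy, h0, h1⟩ := hx
        obtain ⟨i, hle, hlt⟩ := exists_subinterval I x h0.le h1
        have hfo := hγ i x hle hlt.le
        set a := I.pts i.castSucc with ha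
        set a' := I.pts i.succ with ha'
        set b := J.pts i.castSucc with hb
        set b' := J.pts i.succ with hb'
        have haa : a < a' := sub_lt I i
        have hbb : b < b' := sub_lt J i
        have hane : a' - a ≠ 0 := sub_ne_zero.mpr (ne_of_gt haa)
        have hsl : (b' - b) / (a' - a) = 2 ^ (I.lev i) / 2 ^ (J.lev i) := by
          have h1' : a' - a = 1 / 2 ^ (I.lev i) := by
            rw [ha, ha', I.pts_castSucc_eq i, I.pts_succ_eq i]; ring
          have h2' : b' - b = 1 / 2 ^ (J.lev i) := by
            rw [hb, hb', J.pts_castSucc_eq i, J.pts_succ_eq i]; ring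
          rw [h1', h2']
          field_simp
        refine ⟨?_, ?_, ?_⟩
        · rw [hfo]
          exact dy_add (dy_pts J _)
            (dy_mul (hsl ▸ dy_pow_div_pow _ _) (dy_sub hdy (dy_pts I _)))
        · rw [hfo]
          rcases eq_or_lt_of_le hle with heq | hq
          · have hi0 : i.castSucc ≠ 0 := by
              intro h
              rw [ha, h, I.first] at heq
              exact (ne_of_gt h0) heq.symm
            have hbpos : 0 < b := by
              have hpos : (0 : Fin (n+2)) < i.castSucc := Fin.pos_of_ne_zero hi0
              have := J.mono hpos
              rw [J.first] at this
              exact this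
            rw [← heq, sub_self, mul_zero, add_zero]
            exact hbpos
          · have hspos : 0 < (b' - b) / (a' - a) := div_pos (by linarith) (by linarith)
            have : 0 < (b' - b) / (a' - a) * (x - a) := mul_pos hspos (by linarith)
            have hb0 : 0 ≤ b := pts_nonneg J _
            linarith
        · rw [hfo]
          have hspos : 0 < (b' - b) / (a' - a) := div_pos (by linarith) (by linarith)
          have hkey : (b' - b) / (a' - a) * (x - a) < (b' - b) / (a' - a) * (a' - a) :=
            mul_lt_mul_of_pos_left (by linarith) hspos
          rw [div_mul_cancel₀ _ hane] at hkey
          have hb1 : b' ≤ 1 := pts_le_one J _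
          linarith
      · intro y hy
        rw [Edyadic_iff] at hy
        obtain ⟨hdy, h0, h1⟩ := hy
        obtain ⟨i, hle, hlt⟩ := exists_subinterval J y h0.le h1
        set a := I.pts i.castSucc with ha
        set a' := I.pts i.succ with ha'
        set b := J.pts i.castSucc with hb
        set b' := J.pts i.succ with hb'
        have haa : a < a' := sub_lt I i
        have hbb : b < b' := sub_lt J i
        have hane : a' - a ≠ 0 := sub_ne_zero.mpr (ne_of_gt haa)
        have hbne : b' - b ≠ 0 := sub_ne_zero.mpr (ne_of_gt hbb)
        set q := a + (a' - a) / (b' - b) * (y - b) with hqdef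
        have hrpos : 0 < (a' - a) / (b' - b) := div_pos (by linarith) (by linarith)
        have hqa : a ≤ q := by
          have : 0 ≤ (a' - a) / (b' - b) * (y - b) := mul_nonneg hrpos.le (by linarith)
          rw [hqdef]; linarith
        have hqa' : q < a' := by
          have hkey : (a' - a) / (b' - b) * (y - b) < (a' - a) / (b' - b) * (b' - b) :=
            mul_lt_mul_of_pos_left (by linarith) hrpos
          rw [div_mul_cancel₀ _ hbne] at hkey
          rw [hqdef]; linarith
        have hγq : γ q = y := by
          have hfo := hγ i q hqa hqa'.le
          rw [hfo, hqdef]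
          have hcan : (b' - b) / (a' - a) * ((a' - a) / (b' - b)) = 1 := by
            field_simp
          rw [add_sub_cancel_left, ← mul_assoc, hcan, one_mul]
          ring
        refine ⟨q, ?_, hγq⟩
        rw [Edyadic_iff]
        have hsl : (a' - a) / (b' - b) = 2 ^ (J.lev i) / 2 ^ (I.lev i) := by
          have h1' : a' - a = 1 / 2 ^ (I.lev i) := by
            rw [ha, ha', I.pts_castSucc_eq i, I.pts_succ_eq i]; ring
          have h2' : b' - b = 1 / 2 ^ (J.lev i) := by
            rw [hb, hb', J.pts_castSucc_eq i, J.pts_succ_eq i]; ring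
          rw [h1', h2']
          field_simp
        refine ⟨?_, ?_, ?_⟩
        · rw [hqdef]
          exact dy_add (dy_pts I _)
            (dy_mul (hsl ▸ dy_pow_div_pow _ _) (dy_sub hdy (dy_pts J _)))
        · rcases eq_or_lt_of_le (by linarith : b ≤ y) with heq | hby
          · have hq_eq : q = a := by rw [hqdef, ← heq, sub_self, mul_zero, add_zero]
            have hapos : 0 < a := by
              rcases eq_or_ne i.castSucc 0 with hc0 | hc0
              · exfalso
                have hb0 : b = 0 := by rw [hb, hc0, J.first]
                rw [hb0] at heq
                exact (ne_of_gt h0) heq.symm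
              · have hmono := I.mono (Fin.pos_of_ne_zero hc0)
                rw [I.first] at hmono
                rw [ha]
                exact hmono
            rw [hq_eq]; exact hapos
          · have hpp : 0 < (a' - a) / (b' - b) * (y - b) := mul_pos hrpos (by linarith)
            rw [hqdef]; linarith [pts_nonneg I i.castSucc]
        · have := pts_le_one I i.succ
          linarith
    · -- sign condition
      intro A B hA hB hmid
      obtain ⟨m, k, hk, rfl⟩ := isSD_rep hA
      have hA' : SDp m k ∈ SDSet := SDp_mem m k hk
      have hmidA := midQ_SDp m k
      have hp2 : (0:ℚ) < 2 ^ (m+1) := two_pow_posQ (m+1)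
      have h2m : (2:ℕ)^(m+1) = 2 * 2^m := by ring
      have he0 : 0 < midQ (SDp m k) := by
        rw [hmidA]
        apply div_pos _ hp2
        positivity
      have he1 : midQ (SDp m k) < 1 := by
        rw [hmidA, div_lt_one hp2]
        have hcomp : (2*k+1 : ℕ) < 2^(m+1) := by omega
        exact_mod_cast hcomp
      obtain ⟨i, hle, hlt⟩ := exists_subinterval I (midQ (SDp m k)) he0.le he1
      rcases eq_or_lt_of_le hle with heq | hstrict
      · have hmem : midQ (SDp m k) ∈ EIn I :=
          Or.inr ⟨⟨i.castSucc, heq⟩, ne_of_gt he0, ne_of_lt he1⟩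
        rw [← heIr] at hmem
        obtain ⟨j, hj⟩ := hmem
        refine (H j (SDp m k) B hA' hB hj.symm ?_).symm
        rw [← hmid, ← hj, heIf, heJf]
        exact gamma_fEnum hγ j
      · have hIa := I.pts_castSucc_eq i
        have hIa' := I.pts_succ_eq i
        have hJa := J.pts_castSucc_eq i
        have hJa' := J.pts_succ_eq i
        set u := I.lev i with hu
        set p := I.idx i with hpdef
        set v := J.lev i with hv
        set q := J.idx i with hqdef
        have hpu : p < 2^u := I.idx_lt i
        have hqv : q < 2^v := J.idx_lt i
        have hN1 : p * 2^(m+1) < (2*k+1) * 2^u := by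
          have hx := hstrict
          rw [hIa, hmidA] at hx
          rw [div_lt_div_iff₀ (two_pow_posQ u) hp2] at hx
          exact_mod_cast hx
        have hN2 : (2*k+1) * 2^u < (p+1) * 2^(m+1) := by
          have hx := hlt
          rw [hIa', hmidA] at hx
          rw [div_lt_div_iff₀ hp2 (two_pow_posQ u)] at hx
          exact_mod_cast hx
        have hum : u ≤ m := by
          by_contra hcon
          push_neg at hcon
          have hc : (2:ℕ)^u = 2^(m+1) * 2^(u - (m+1)) := by rw [← pow_add]; congr 1; omega
          have e1 : p < (2*k+1) * 2^(u - (m+1)) := by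
            have h1 : 2^(m+1) * p < 2^(m+1) * ((2*k+1) * 2^(u - (m+1))) := by
              calc 2^(m+1) * p = p * 2^(m+1) := by ring
                _ < (2*k+1) * 2^u := hN1
                _ = 2^(m+1) * ((2*k+1) * 2^(u - (m+1))) := by rw [hc]; ring
            exact Nat.lt_of_mul_lt_mul_left h1
          have e2 : (2*k+1) * 2^(u - (m+1)) < p + 1 := by
            have h1 : 2^(m+1) * ((2*k+1) * 2^(u - (m+1))) < 2^(m+1) * (p+1) := by
              calc 2^(m+1) * ((2*k+1) * 2^(u - (m+1))) = (2*k+1) * 2^u := by rw [hc]; ring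
                _ < (p+1) * 2^(m+1) := hN2
                _ = 2^(m+1) * (p+1) := by ring
            exact Nat.lt_of_mul_lt_mul_left h1
          omega
        set d := m - u with hd
        have hmd : m = u + d := by omega
        have h2d : (2:ℕ)^(d+1) = 2 * 2^d := by ring
        have e1 : p * 2^(d+1) < 2*k+1 := by
          have h1 : 2^u * (p * 2^(d+1)) < 2^u * (2*k+1) := by
            calc 2^u * (p * 2^(d+1)) = p * 2^(m+1) := by
                  rw [hmd, show u + d + 1 = u + (d+1) from rfl, pow_add]; ring
              _ < (2*k+1) * 2^u := hN1
              _ = 2^u * (2*k+1) := by ring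
          exact Nat.lt_of_mul_lt_mul_left h1
        have e2 : 2*k+1 < (p+1) * 2^(d+1) := by
          have h1 : 2^u * (2*k+1) < 2^u * ((p+1) * 2^(d+1)) := by
            calc 2^u * (2*k+1) = (2*k+1) * 2^u := by ring
              _ < (p+1) * 2^(m+1) := hN2
              _ = 2^u * ((p+1) * 2^(d+1)) := by
                  rw [hmd, show u + d + 1 = u + (d+1) from rfl, pow_add]; ring
          exact Nat.lt_of_mul_lt_mul_left h1
        have ha1 : p * 2^(d+1) = 2*(p*2^d) := by rw [h2d]; ring
        have ha2 : (p+1)*2^(d+1) = 2*(p*2^d) + 2*2^d := by rw [h2d]; ring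
        have hklo : p * 2^d ≤ k := by omega
        have hkhi : k < p * 2^d + 2^d := by omega
        set j0 := k - p * 2^d with hj0
        have hjk : k = p * 2^d + j0 := by omega
        have hjlt : j0 < 2^d := by omega
        have hklt : q * 2^d + j0 < 2^(v+d) := by
          have h1 : (q+1) * 2^d ≤ 2^v * 2^d := Nat.mul_le_mul_right _ (by omega)
          have h2 : (q+1) * 2^d = q*2^d + 2^d := by ring
          have h3 : (2:ℕ)^(v+d) = 2^v * 2^d := pow_add 2 v d
          omega
        have heval : γ (midQ (SDp m k)) = midQ (SDp (v+d) (q * 2^d + j0)) := by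
          have hfo := hγ i (midQ (SDp m k)) hle hlt.le
          rw [hfo, hIa, hIa', hJa, hJa', hmidA, midQ_SDp]
          have hkc : (k:ℚ) = (p:ℚ) * 2^d + (j0:ℚ) := by exact_mod_cast hjk
          rw [hkc, hmd]
          have n1 := (two_pow_posQ u).ne'
          have n2 := (two_pow_posQ v).ne'
          have n3 := (two_pow_posQ (u+d+1)).ne'
          have n4 := (two_pow_posQ (v+d+1)).ne'
          push_cast
          field_simp
          ring
        have hBeq : B = SDp (v+d) (q*2^d + j0) :=
          mid_inj hB (SDp_mem _ _ hklt) (by rw [← hmid, heval])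
        have hidx : (2 * i.val) < 2*(n+1)-1 := by have := i.isLt; omega
        have hpq : s (SDp u p) = s (SDp v q) := by
          apply H ⟨2*i.val, hidx⟩ _ _ (SDp_mem _ _ hpu) (SDp_mem _ _ hqv)
          · rw [heIf, fEnum_even I ⟨2*i.val, hidx⟩ (by simp) i (by simp), I.sub_eq_SDp i]
          · rw [heJf, fEnum_even J ⟨2*i.val, hidx⟩ (by simp) i (by simp), J.sub_eq_SDp i]
        rw [s_SDp hs u p hpu, s_SDp hs v q hqv] at hpq
        rw [hBeq, s_SDp hs _ _ hklt, s_SDp hs _ _ hk, dsgn_split d q j0 hjlt, hjk,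
            dsgn_split d p j0 hjlt, hpq]
end
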